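/- arXiv:math/0603075 — 4 statements merged into one kernel-verified Lean document; each statement's English description precedes it below -/
import Mathlib

section
/- For every k ∈ ℕ and every α ∈ [0, π], (P_k^0(cos α))^2 + 2 · Σ_{m=1}^{k} ((k−m)!/(k+m)!) · (P_k^m(cos α))^2 = 1, where P_k^m denotes the m-th associated Legendre function of degree k. -/
open MeasureTheory Real

noncomputable def legendreP (n : ℕ) : Polynomial ℝ :=
  Polynomial.C ((2 ^ n * n.factorial : ℝ))⁻¹ *
    (Polynomial.derivative^[n] ((Polynomial.X ^ 2 - 1) ^ n))

noncomputable def assocP (n m : ℕ) (x : ℝ) : ℝ :=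
  (-1 : ℝ) ^ m * (1 - x ^ 2) ^ ((m : ℝ) / 2) *
    (Polynomial.derivative^[m] (legendreP n)).eval x

noncomputable def sphY (ℓ : ℕ) (m : ℤ) (θ φ : ℝ) : ℝ :=
  if m = 0 then Real.sqrt (2 * ℓ + 1) * assocP ℓ 0 (Real.cos θ)
  else if 0 < m then
    Real.sqrt (2 * (2 * ℓ + 1) * ((ℓ - m.toNat).factorial : ℝ) / ((ℓ + m.toNat).factorial : ℝ)) *
      assocP ℓ m.toNat (Real.cos θ) * Real.cos ((m : ℝ) * φ)
  else
    Real.sqrt (2 * (2 * ℓ + 1) * ((ℓ - (-m).toNat).factorial : ℝ) / ((ℓ + (-m).toNat).factorial : ℝ)) *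
      assocP ℓ (-m).toNat (Real.cos θ) * Real.sin (((-m : ℤ) : ℝ) * φ)

noncomputable def fvec (d : ℕ) (j : Fin ((d + 1) ^ 2)) (θ φ : ℝ) : ℝ :=
  sphY (Nat.sqrt j) ((j : ℤ) - (Nat.sqrt j : ℤ) ^ 2 - (Nat.sqrt j : ℤ)) θ φ

noncomputable def infoMat (d : ℕ) (ξ : Measure (ℝ × ℝ)) :
    Matrix (Fin ((d + 1) ^ 2)) (Fin ((d + 1) ^ 2)) ℝ :=
  fun i j => ∫ z, fvec d i z.1 z.2 * fvec d j z.1 z.2 ∂ξ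

noncomputable def unifSphere : Measure (ℝ × ℝ) :=
  ((volume.restrict (Set.Icc 0 π)).withDensity
      (fun θ => ENNReal.ofReal (Real.sin θ / (4 * π)))).prod
    (volume.restrict (Set.Ioc (-π) π))


open Polynomial

lemma eval_one_rodrigues (n : ℕ) :
    (derivative^[n] (((X : ℝ[X]) ^ 2 - 1) ^ n)).eval 1 = (2 ^ n * n.factorial : ℝ) := by
  have hfac : (((X : ℝ[X]) ^ 2 - 1) ^ n) = (X - C 1) ^ n * (X + C 1) ^ n := by
    rw [← mul_pow, Polynomial.C_1]; ring_nf
  rw [hfac, Polynomial.iterate_derivative_mul, Polynomial.eval_finset_sum]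
  rw [Finset.sum_eq_single 0]
  · rw [Nat.sub_zero, Polynomial.iterate_derivative_X_sub_pow_self]
    simp
    ring
  · intro b hb hb0
    rw [Polynomial.iterate_derivative_X_sub_pow]
    have hbn : b ≤ n := Nat.lt_succ_iff.mp (Finset.mem_range.mp hb)
    have h2 : n - (n - b) = b := Nat.sub_sub_self hbn
    simp [h2, sub_self, zero_pow hb0]
  · intro h; simp at h

lemma leibX (p : ℝ[X]) (n : ℕ) :
    derivative^[n + 1] (X * p) =
      X * derivative^[n + 1] p + C ((n : ℝ) + 1) * derivative^[n] p := by
  induction n with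
  | zero => simp [derivative_mul]; ring
  | succ n ih =>
    rw [Function.iterate_succ_apply', ih]
    rw [show n + 1 + 1 = (n + 1) + 1 from rfl,
      Function.iterate_succ_apply' derivative (n + 1) p,
      Function.iterate_succ_apply' derivative n p]
    simp only [derivative_add, derivative_mul, derivative_C, derivative_X]
    push_cast
    simp only [C_add, C_mul, C_pow, C_1, C_0, map_ofNat]
    ring

lemma leibA (p : ℝ[X]) (n : ℕ) :
    derivative^[n + 1] ((X ^ 2 - 1) * derivative p) =
      (X ^ 2 - 1) * derivative^[n + 2] p + C (2 * ((n : ℝ) + 1)) * X * derivative^[n + 1] p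
        + C (((n : ℝ) + 1) * n) * derivative^[n] p := by
  induction n with
  | zero =>
    simp only [Function.iterate_one, zero_add, Nat.cast_zero]
    simp [derivative_mul, Function.iterate_succ_apply']
    rw [show (C (2:ℝ)) = (2 : ℝ[X]) from map_ofNat C 2]
    ring
  | succ n ih =>
    rw [Function.iterate_succ_apply', ih]
    rw [show n + 1 + 2 = (n + 2) + 1 from rfl,
      Function.iterate_succ_apply' derivative (n + 2) p,
      show n + 1 + 1 = (n + 1) + 1 from rfl,
      Function.iterate_succ_apply' derivative (n + 1) p,
      Function.iterate_succ_apply' derivative n p]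
    simp only [derivative_add, derivative_mul, derivative_sub, derivative_C, derivative_X,
      derivative_pow, derivative_one]
    push_cast
    simp only [C_add, C_mul, C_pow, C_1, C_0, map_ofNat]
    ring

noncomputable def Qp (k m : ℕ) : ℝ[X] := derivative^[m] (legendreP k)

lemma derivQp (k m : ℕ) : derivative (Qp k m) = Qp k (m + 1) :=
  (Function.iterate_succ_apply' derivative m (legendreP k)).symm

lemma Qp_eq (k m : ℕ) :
    Qp k m = C ((2 ^ k * k.factorial : ℝ))⁻¹ *
      derivative^[k + m] (((X : ℝ[X]) ^ 2 - 1) ^ k) := by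
  rw [Qp, legendreP, Polynomial.iterate_derivative_C_mul, ← Function.iterate_add_apply,
    Nat.add_comm m k]

lemma pell (k : ℕ) :
    ((X : ℝ[X]) ^ 2 - 1) * derivative (((X : ℝ[X]) ^ 2 - 1) ^ k) =
      C (2 * (k : ℝ)) * (X * ((X ^ 2 - 1) ^ k)) := by
  cases k with
  | zero => simp
  | succ j =>
    rw [derivative_pow]
    simp only [Nat.add_sub_cancel, derivative_sub, derivative_one, derivative_X_pow, pow_one,
      sub_zero]
    push_cast
    simp only [C_add, C_mul, C_1, C_0, map_ofNat]
    ring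

lemma ode0 (k : ℕ) :
    (X ^ 2 - 1) * Qp k 2 + C (2 : ℝ) * X * Qp k 1 - C ((k : ℝ) * (k + 1)) * Qp k 0 = 0 := by
  have h := congrArg (fun q => (C ((2 ^ k * k.factorial : ℝ))⁻¹) * derivative^[k + 1] q) (pell k)
  rw [leibA ((X ^ 2 - 1) ^ k) k] at h
  rw [Polynomial.iterate_derivative_C_mul, leibX] at h
  rw [Qp_eq k 2, Qp_eq k 1, Qp_eq k 0, Nat.add_zero]
  set c : ℝ := ((2 ^ k * k.factorial : ℝ))⁻¹
  set u := ((X : ℝ[X]) ^ 2 - 1) ^ k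
  rw [mul_left_comm] at h
  simp only [C_add, C_mul, C_pow, C_1, C_0, map_ofNat] at h ⊢
  linear_combination (norm := ring_nf) h

lemma ode (k m : ℕ) :
    (X ^ 2 - 1) * Qp k (m + 2) + C (2 * ((m : ℝ) + 1)) * X * Qp k (m + 1)
      + C ((m : ℝ) * (m + 1) - k * (k + 1)) * Qp k m = 0 := by
  induction m with
  | zero =>
    have h := ode0 k
    simp only [C_add, C_mul, C_sub, C_pow, C_1, C_0, map_ofNat, Nat.cast_zero] at h ⊢
    linear_combination (norm := ring_nf) h
  | succ m ih =>
    have h := congrArg derivative ih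
    simp only [derivative_add, derivative_sub, derivative_mul, derivative_C, derivative_X,
      derivative_pow, derivative_one, derivQp, derivative_zero] at h
    simp only [C_add, C_mul, C_sub, C_pow, C_1, C_0, map_ofNat, Nat.cast_succ] at h ⊢
    push_cast at h ⊢
    linear_combination (norm := (ring_nf; simp)) h

noncomputable def cc (k m : ℕ) : ℝ := ((k - m).factorial : ℝ) / ((k + m).factorial : ℝ)

noncomputable def TT (k m : ℕ) : ℝ[X] := C (cc k m) * ((1 - X ^ 2) ^ m * (Qp k m) ^ 2)

noncomputable def BB (k m : ℕ) : ℝ[X] :=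
  C (cc k m) * ((1 - X ^ 2) ^ m * (Qp k m * Qp k (m + 1)))

lemma cc_rel (k m : ℕ) (h : m < k) :
    cc k m = (((k : ℝ) + m + 1) * ((k : ℝ) - m)) * cc k (m + 1) := by
  have h1 : k - m = (k - (m + 1)) + 1 := by omega
  have h2 : k + (m + 1) = (k + m) + 1 := by omega
  rw [cc, cc, h1, h2, Nat.factorial_succ, Nat.factorial_succ]
  have hkm : ((k : ℝ) - m) = ((k - (m + 1) : ℕ) : ℝ) + 1 := by
    have : ((k - (m+1) : ℕ) : ℝ) = (k : ℝ) - (m + 1) := by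
      push_cast [Nat.cast_sub h]; ring
    rw [this]; ring
  have hne1 : (((k + m).factorial : ℝ)) ≠ 0 := Nat.cast_ne_zero.mpr (Nat.factorial_ne_zero _)
  have hne2 : ((k : ℝ) + m + 1) ≠ 0 := by positivity
  field_simp
  push_cast
  rw [hkm]
  ring

lemma key (k m : ℕ) (h : m < k) :
    derivative (TT k (m + 1)) = BB k (m + 1) - BB k m := by
  have hode := ode k m
  have hc : C (cc k m) = C ((((k : ℝ) + m + 1) * ((k : ℝ) - m))) * C (cc k (m + 1)) := by
    rw [← C_mul, cc_rel k m h]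
  rw [TT, BB, BB, hc]
  simp only [derivative_mul, derivative_C, derivative_pow, derivative_sub, derivative_one,
    derivative_X, derivQp, zero_mul, zero_add, derivative_one]
  simp only [Nat.add_sub_cancel]
  push_cast at hode ⊢
  simp only [C_add, C_mul, C_sub, C_neg, C_pow, C_1, C_0, map_ofNat] at hode ⊢
  linear_combination (norm := ring_nf)
    (-(C (cc k (m+1)) * (1 - X^2)^m * Qp k (m+1))) * hode

lemma natDegree_legendreP (k : ℕ) : (legendreP k).natDegree ≤ k := by
  rw [legendreP]
  refine (natDegree_C_mul_le _ _).trans ?_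
  refine (Polynomial.natDegree_iterate_derivative _ _).trans ?_
  have h1 : ((X : ℝ[X]) ^ 2 - 1).natDegree ≤ 2 := by
    refine (natDegree_sub_le _ _).trans ?_
    simp [natDegree_X_pow]
  have h2 : (((X : ℝ[X]) ^ 2 - 1) ^ k).natDegree ≤ k * 2 :=
    (natDegree_pow_le).trans (by exact Nat.mul_le_mul_left k h1)
  omega

lemma Qp_top (k : ℕ) : Qp k (k + 1) = 0 :=
  Polynomial.iterate_derivative_eq_zero (Nat.lt_succ_of_le (natDegree_legendreP k))

noncomputable def Fk (k : ℕ) : ℝ[X] := TT k 0 + C 2 * ∑ m ∈ Finset.range k, TT k (m + 1)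

lemma derivT0 (k : ℕ) : derivative (TT k 0) = C 2 * BB k 0 := by
  rw [TT, BB]
  simp only [pow_zero, one_mul, derivative_mul, derivative_C, zero_mul, zero_add,
    derivative_pow, derivQp, Nat.cast_ofNat, pow_one, map_ofNat]
  ring

lemma BB_top (k : ℕ) : BB k k = 0 := by
  rw [BB, Qp_top]
  ring

lemma derivF (k : ℕ) : derivative (Fk k) = 0 := by
  rw [Fk]
  rw [derivative_add, derivative_mul, derivative_C, derivative_sum]
  rw [Finset.sum_congr rfl (fun m hm => key k m (Finset.mem_range.mp hm))]
  rw [Finset.sum_range_sub (fun m => BB k m)]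
  rw [derivT0, BB_top]
  ring

lemma eval_legendre_one (k : ℕ) : (legendreP k).eval 1 = 1 := by
  rw [legendreP]
  rw [eval_mul, eval_C, eval_one_rodrigues]
  rw [inv_mul_cancel₀]
  positivity

lemma Fk_eval (k : ℕ) (x : ℝ) : (Fk k).eval x = 1 := by
  have h0 : Fk k = C ((Fk k).coeff 0) := eq_C_of_derivative_eq_zero (derivF k)
  have h1 : (Fk k).eval 1 = 1 := by
    rw [Fk, eval_add, eval_mul, eval_C, eval_finset_sum]
    have hz : ∀ m ∈ Finset.range k, (TT k (m + 1)).eval 1 = 0 := by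
      intro m _
      rw [TT]
      simp [eval_mul, eval_pow]
    rw [Finset.sum_congr rfl hz]
    rw [TT]
    have hcc : cc k 0 = 1 := by
      rw [cc]
      simp [div_self, Nat.cast_ne_zero.mpr (Nat.factorial_ne_zero k)]
    simp [hcc, Qp, eval_legendre_one]
  rw [h0] at h1 ⊢
  simpa using h1

lemma sq_rpow_half (m : ℕ) (a : ℝ) (ha : 0 ≤ a) : (a ^ ((m : ℝ) / 2)) ^ 2 = a ^ m := by
  rw [← Real.rpow_natCast (a ^ ((m : ℝ) / 2)) 2, ← Real.rpow_mul ha, ← Real.rpow_natCast a m]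
  norm_num

/-- Addition-theorem special case: for every `k : ℕ` and `α ∈ [0, π]`,
`(P_k^0(cos α))² + 2 ∑_{m=1}^k ((k-m)!/(k+m)!) (P_k^m(cos α))² = 1`. -/
theorem legendre_addition_special (k : ℕ) (α : ℝ) (hα : α ∈ Set.Icc (0 : ℝ) π) :
    (assocP k 0 (Real.cos α)) ^ 2 +
      2 * ∑ m ∈ Finset.Icc 1 k,
        (((k - m).factorial : ℝ) / ((k + m).factorial : ℝ)) * (assocP k m (Real.cos α)) ^ 2
    = 1 := by
  set x := Real.cos α
  have hx : (0 : ℝ) ≤ 1 - x ^ 2 := by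
    have := Real.neg_one_le_cos α
    have := Real.cos_le_one α
    nlinarith
  have hsq : ∀ m : ℕ, (assocP k m x) ^ 2 = (1 - x ^ 2) ^ m * ((Qp k m).eval x) ^ 2 := by
    intro m
    have h1 : (((-1 : ℝ) ^ m) ^ 2) = 1 := by
      rw [← pow_mul, Nat.mul_comm m 2, pow_mul]
      norm_num
    rw [assocP, mul_pow, mul_pow, h1, sq_rpow_half m _ hx]
    simp only [Qp]
    ring
  have hF := Fk_eval k x
  rw [Fk, eval_add, eval_mul, eval_C, eval_finset_sum] at hF
  rw [← hF]
  congr 1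
  · rw [TT, eval_mul, eval_C, eval_mul, eval_pow, eval_pow]
    have hcc : cc k 0 = 1 := by
      rw [cc]
      simp [div_self, Nat.cast_ne_zero.mpr (Nat.factorial_ne_zero k)]
    rw [hsq 0, hcc]
    simp
  · rw [show Finset.Icc 1 k = Finset.Ico 1 (k + 1) from (Finset.Ico_add_one_right_eq_Icc 1 k).symm,
      Finset.sum_Ico_eq_sum_range]
    simp only [Nat.add_sub_cancel]
    congr 1
    apply Finset.sum_congr rfl
    intro m _
    rw [show 1 + m = m + 1 from Nat.add_comm 1 m]
    rw [hsq (m + 1), TT, cc]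
    simp only [eval_mul, eval_C, eval_pow, eval_sub, eval_one, eval_X]
    try ring
end

section
/- The uniform distribution on the sphere is Φ_p-optimal for estimating K^T c for every p ∈ [−∞, 1): for any design ξ on [0,π]×(−π,π] with range(K) ⊆ range(M(ξ)), Φ_p(ξ) ≤ Φ_p(ξ*), where Φ_p(ξ) = (tr((K^T M^−(ξ) K)^{−p}))^{1/p} and K is any block selection matrix of the form K_{k_0,...,k_q}. -/
open MeasureTheory Real Matrix

section AuxProofs
open Polynomial
namespace PhiAux

noncomputable def Rp (l k : ℕ) : Polynomial ℝ := derivative^[k] ((X ^ 2 - 1) ^ l)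

@[simp] lemma deriv_Rp (l k : ℕ) : derivative (Rp l k) = Rp l (k + 1) := by
  simp [Rp, Function.iterate_succ_apply']

lemma base0 (l : ℕ) : (X ^ 2 - 1) * Rp l 1 = 2 * (l : ℝ[X]) * X * Rp l 0 := by
  cases l with
  | zero => simp [Rp]
  | succ n =>
    have : Rp (n+1) 1 = 2 * ((n:ℝ[X]) + 1) * X * (X ^ 2 - 1) ^ n := by
      simp [Rp, derivative_pow, map_ofNat]
      ring
    rw [this]
    simp [Rp]
    ring

lemma Jrec (l j : ℕ) :
    (X ^ 2 - 1) * Rp l (j + 2) + 2 * ((j:ℝ[X]) + 1) * X * Rp l (j + 1)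
      + ((j:ℝ[X]) + 1) * (j:ℝ[X]) * Rp l j
    = 2 * (l : ℝ[X]) * X * Rp l (j + 1) + 2 * (l : ℝ[X]) * ((j:ℝ[X]) + 1) * Rp l j := by
  induction j with
  | zero =>
    have h := congrArg derivative (base0 l)
    simp only [derivative_mul, derivative_sub, derivative_one, derivative_X,
      derivative_X_pow, map_ofNat, map_natCast, Nat.cast_ofNat, deriv_Rp, derivative_ofNat, derivative_natCast] at h
    push_cast at h ⊢
    linear_combination h
  | succ n ih =>
    have h := congrArg derivative ih
    simp only [derivative_mul, derivative_sub, derivative_one, derivative_X,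
      derivative_X_pow, map_ofNat, map_natCast, Nat.cast_ofNat, deriv_Rp, derivative_ofNat, derivative_natCast,
      derivative_add] at h
    push_cast at h ⊢
    linear_combination h

end PhiAux

namespace PhiAux2
open PhiAux

noncomputable def Q (l m : ℕ) : Polynomial ℝ := derivative^[m] (legendreP l)

@[simp] lemma deriv_Q (l m : ℕ) : derivative (Q l m) = Q l (m + 1) := by
  simp [Q, Function.iterate_succ_apply']

lemma Q_eq (l m : ℕ) : Q l m = C ((2 ^ l * l.factorial : ℝ))⁻¹ * Rp l (l + m) := by
  rw [Q, legendreP, iterate_derivative_C_mul]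
  congr 1
  simp only [Rp]; rw [Nat.add_comm, Function.iterate_add_apply]

lemma Q_succ_l (l : ℕ) : Q l (l + 1) = 0 := by
  rw [Q_eq]; simp only [Rp]; rw [iterate_derivative_eq_zero, mul_zero]
  have h1 : ((X:ℝ[X]) ^ 2 - 1).natDegree ≤ 2 := by
    apply le_trans (natDegree_sub_le _ _); simp
  have := natDegree_pow_le (p := ((X:ℝ[X]) ^ 2 - 1)) (n := l)
  have : (((X:ℝ[X]) ^ 2 - 1) ^ l).natDegree ≤ l * 2 :=
    le_trans this (by nlinarith)
  omega

lemma ode (l m : ℕ) :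
    (1 - X ^ 2) * Q l (m + 2) + ((l:ℝ[X]) * ((l:ℝ[X]) + 1)) * Q l m
    = 2 * ((m:ℝ[X]) + 1) * X * Q l (m + 1) + ((m:ℝ[X]) * ((m:ℝ[X]) + 1)) * Q l m := by
  have h := Jrec l (l + m)
  have e0 : l + m + 2 = l + (m + 2) := by omega
  have e1 : l + m + 1 = l + (m + 1) := by omega
  rw [e0, e1] at h
  simp only [Q_eq]
  push_cast at h ⊢
  linear_combination (- C ((2 ^ l * l.factorial : ℝ))⁻¹) * h

lemma eval_one_aux (l : ℕ) : ∀ h : ℝ[X],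
    (derivative^[l] ((X - 1) ^ l * h)).eval 1 = l.factorial * h.eval 1 := by
  induction l with
  | zero => intro h; simp
  | succ n ih =>
    intro h
    rw [Function.iterate_succ_apply]
    have e : derivative ((X - 1) ^ (n+1) * h)
        = (X - 1) ^ n * (((n:ℝ[X]) + 1) * h + (X - 1) * derivative h) := by
      rw [derivative_mul, derivative_pow]
      simp only [derivative_sub, derivative_X, derivative_one, sub_zero, mul_one,
        Nat.add_sub_cancel, map_natCast, _root_.map_add, _root_.map_one, Nat.cast_add, Nat.cast_one]
      ring
    rw [e, ih]
    simp [Nat.factorial_succ]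
    ring

lemma Q_zero_eval_one (l : ℕ) : (Q l 0).eval 1 = 1 := by
  rw [Q_eq]
  have e : Rp l (l + 0) = derivative^[l] ((X - 1) ^ l * (X + 1) ^ l) := by
    simp only [Rp, Nat.add_zero]
    congr 2
    rw [← mul_pow]; ring_nf
  rw [e]
  have h2 : ((2:ℝ) ^ l * l.factorial) ≠ 0 := by positivity
  simp only [eval_mul, eval_C, eval_one_aux l]
  simp only [eval_pow, eval_add, eval_X, eval_one]
  rw [show (1:ℝ) + 1 = 2 by norm_num]
  field_simp

noncomputable def cm (l m : ℕ) : ℝ := ((l - m).factorial : ℝ) / ((l + m).factorial : ℝ)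

lemma cm_pos (l m : ℕ) : 0 < cm l m := by
  unfold cm; positivity

lemma cm_zero (l : ℕ) : cm l 0 = 1 := by
  unfold cm
  rw [Nat.sub_zero, Nat.add_zero, div_self (by positivity)]

lemma cm_rec (l m : ℕ) (hm : m < l) :
    cm l (m+1) * (((l:ℝ) + m + 1) * ((l:ℝ) - m)) = cm l m := by
  unfold cm
  have e1 : l + (m+1) = (l + m) + 1 := by omega
  have e2 : l - m = (l - (m+1)) + 1 := by omega
  rw [e1, e2, Nat.factorial_succ, Nat.factorial_succ]
  have c1 : ((l - (m+1) : ℕ) : ℝ) = (l:ℝ) - m - 1 := by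
    rw [Nat.cast_sub (by omega)]; push_cast; ring
  push_cast [c1]
  have hf1 : ((l + m).factorial : ℝ) ≠ 0 := by positivity
  have hf2 : ((l:ℝ) + m + 1) ≠ 0 := by positivity
  field_simp
  ring

noncomputable def Gm (l m : ℕ) : ℝ[X] := C (cm l m) * (1 - X^2)^m * (Q l m)^2
noncomputable def Hm (l m : ℕ) : ℝ[X] := C (cm l m) * (1 - X^2)^m * Q l (m+1) * Q l m

lemma deriv_Gm (l m : ℕ) (hm : m < l) :
    derivative (Gm l (m+1)) = Hm l (m+1) - Hm l m := by
  have hode := ode l m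
  have h2 : (C (cm l (m+1)) : ℝ[X]) * (((l:ℝ[X]) + (m:ℝ[X]) + 1) * ((l:ℝ[X]) - (m:ℝ[X])))
      = C (cm l m) := by
    have := congrArg C (cm_rec l m hm)
    simpa [_root_.map_mul, _root_.map_add, _root_.map_sub, _root_.map_one] using this
  simp only [Gm, Hm, derivative_mul, derivative_pow, derivative_sub, derivative_one,
    derivative_X_pow, derivative_X, derivative_C, deriv_Q, map_ofNat, map_natCast,
    _root_.map_add, _root_.map_one, Nat.cast_ofNat, Nat.cast_add, Nat.cast_one, Nat.add_sub_cancel,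
    zero_mul, zero_add, mul_one]
  push_cast
  linear_combination (C (cm l (m+1)) * (1 - X^2)^m * Q l (m+1)) * hode
    - ((1 - X^2)^m * Q l (m+1) * Q l m) * h2

noncomputable def Fp (l : ℕ) : ℝ[X] :=
  Q l 0 ^ 2 + 2 * ∑ m ∈ Finset.range l, Gm l (m+1)

lemma deriv_Fp (l : ℕ) : derivative (Fp l) = 0 := by
  unfold Fp
  rw [derivative_add, derivative_mul, map_sum]
  have e : ∀ m ∈ Finset.range l, derivative (Gm l (m+1)) = Hm l (m+1) - Hm l m := by
    intro m hm
    exact deriv_Gm l m (Finset.mem_range.mp hm)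
  rw [Finset.sum_congr rfl e, Finset.sum_range_sub (fun m => Hm l m)]
  have hl : Hm l l = 0 := by
    simp [Hm, Q_succ_l]
  have h0 : Hm l 0 = Q l 1 * Q l 0 := by
    simp [Hm, cm_zero]
  rw [hl, h0]
  simp only [derivative_pow, deriv_Q, derivative_ofNat, map_natCast, map_ofNat, Nat.cast_ofNat,
    zero_mul, zero_add]
  push_cast
  ring

lemma Fp_eq_one (l : ℕ) : Fp l = 1 := by
  have h := eq_C_of_derivative_eq_zero (deriv_Fp l)
  have he : (Fp l).eval 1 = 1 := by
    unfold Fp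
    simp only [eval_add, eval_mul, eval_pow, eval_finset_sum, eval_ofNat]
    rw [Q_zero_eval_one]
      -- Gm eval at 1 is 0
    have : ∀ m ∈ Finset.range l, (Gm l (m+1)).eval 1 = 0 := by
      intro m _
      simp [Gm]
    rw [Finset.sum_congr rfl this]
    simp
  have : Fp l = C ((Fp l).eval 1) := by
    rw [h] at he ⊢
    simpa using congrArg C he
  rw [this, he, _root_.map_one]

lemma sum_identity (l : ℕ) (x : ℝ) :
    (Q l 0).eval x ^ 2
      + 2 * ∑ m ∈ Finset.range l, cm l (m+1) * (1 - x^2)^(m+1) * ((Q l (m+1)).eval x)^2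
    = 1 := by
  have := congrArg (eval x) (Fp_eq_one l)
  simp only [Fp, Gm, eval_add, eval_mul, eval_pow, eval_finset_sum, eval_ofNat, eval_one,
    eval_sub, eval_X, eval_C] at this
  convert this using 3

lemma assocP_sq (l m : ℕ) (x : ℝ) (hx : x ^ 2 ≤ 1) :
    assocP l m x ^ 2 = (1 - x ^ 2) ^ m * ((Q l m).eval x) ^ 2 := by
  have h0 : (0:ℝ) ≤ 1 - x ^ 2 := by nlinarith
  have key : ((1 - x ^ 2) ^ ((m:ℝ)/2)) ^ 2 = (1 - x ^ 2) ^ m := by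
    rw [← Real.rpow_natCast ((1 - x ^ 2) ^ ((m:ℝ)/2)) 2, ← Real.rpow_mul h0,
      Nat.cast_ofNat, div_mul_cancel₀ _ (two_ne_zero), Real.rpow_natCast]
  have : assocP l m x = (-1 : ℝ) ^ m * (1 - x ^ 2) ^ ((m : ℝ) / 2) * (Q l m).eval x := rfl
  rw [this, mul_pow, mul_pow, key, ← pow_mul, mul_comm m 2, pow_mul]
  norm_num

lemma sphY_zero_sq (l : ℕ) (θ φ : ℝ) :
    sphY l 0 θ φ ^ 2 = (2 * l + 1) * ((Q l 0).eval (Real.cos θ)) ^ 2 := by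
  have h1 : sphY l 0 θ φ = Real.sqrt (2 * l + 1) * assocP l 0 (Real.cos θ) := by
    simp [sphY]
  rw [h1, mul_pow, Real.sq_sqrt (by positivity),
    assocP_sq l 0 _ (Real.cos_sq_le_one θ)]
  simp

lemma sphY_pair_sq (l m : ℕ) (θ φ : ℝ) :
    sphY l ((m:ℤ)+1) θ φ ^ 2 + sphY l (-((m:ℤ)+1)) θ φ ^ 2
    = 2 * (2 * l + 1) * cm l (m+1)
        * ((1 - Real.cos θ ^ 2) ^ (m+1) * ((Q l (m+1)).eval (Real.cos θ)) ^ 2) := by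
  have hmz : ((m:ℤ)+1) ≠ 0 := by omega
  have hmp : (0:ℤ) < (m:ℤ)+1 := by omega
  have ht : ((m:ℤ)+1).toNat = m + 1 := by omega
  have ht2 : (-(-((m:ℤ)+1))).toNat = m + 1 := by omega
  have h1 : sphY l ((m:ℤ)+1) θ φ
      = Real.sqrt (2 * (2 * l + 1) * ((l - (m+1)).factorial : ℝ) / ((l + (m+1)).factorial : ℝ)) *
        assocP l (m+1) (Real.cos θ) * Real.cos (((m:ℝ)+1) * φ) := by
    rw [sphY, if_neg hmz, if_pos hmp, ht]
    push_cast
    ring_nf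
  have h2 : sphY l (-((m:ℤ)+1)) θ φ
      = Real.sqrt (2 * (2 * l + 1) * ((l - (m+1)).factorial : ℝ) / ((l + (m+1)).factorial : ℝ)) *
        assocP l (m+1) (Real.cos θ) * Real.sin (((m:ℝ)+1) * φ) := by
    rw [sphY, if_neg (by omega), if_neg (by omega), ht2]
    push_cast
    ring_nf
  have hsq : Real.sqrt (2 * (2 * l + 1) * ((l - (m+1)).factorial : ℝ) / ((l + (m+1)).factorial : ℝ)) ^ 2
      = 2 * (2 * l + 1) * cm l (m+1) := by
    rw [Real.sq_sqrt (by positivity), cm]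
    ring
  rw [h1, h2, mul_pow, mul_pow, mul_pow, mul_pow,
    assocP_sq l (m+1) _ (Real.cos_sq_le_one θ), hsq]
  have htrig := Real.sin_sq_add_cos_sq (((m:ℝ)+1) * φ)
  linear_combination (2 * (2 * (l:ℝ) + 1) * cm l (m + 1) *
    ((1 - Real.cos θ ^ 2) ^ (m + 1) * ((Q l (m+1)).eval (Real.cos θ)) ^ 2)) * htrig

lemma sphY_block (l : ℕ) (θ φ : ℝ) :
    ∑ t ∈ Finset.range (2*l+1), sphY l ((t:ℤ) - l) θ φ ^ 2 = 2*(l:ℝ)+1 := by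
  set g : ℕ → ℝ := fun t => sphY l ((t:ℤ) - l) θ φ ^ 2 with hg
  have hmid : ∑ t ∈ Finset.Ico l (l+1), g t = g l := by simp
  have split : ∑ t ∈ Finset.range (2*l+1), g t
      = (∑ t ∈ Finset.range l, g t) + g l + ∑ t ∈ Finset.Ico (l+1) (2*l+1), g t := by
    rw [Finset.range_eq_Ico,
      ← Finset.sum_Ico_consecutive g (by omega : 0 ≤ l) (by omega : l ≤ 2*l+1),
      ← Finset.sum_Ico_consecutive g (by omega : l ≤ l+1) (by omega : l+1 ≤ 2*l+1),
      hmid]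
    rw [← Finset.range_eq_Ico]
    ring
  have neg_part : ∑ t ∈ Finset.range l, g t
      = ∑ m ∈ Finset.range l, sphY l (-((m:ℤ)+1)) θ φ ^ 2 := by
    rw [← Finset.sum_range_reflect]
    apply Finset.sum_congr rfl
    intro m hm
    have hml : m < l := Finset.mem_range.mp hm
    have e : ((l - 1 - m : ℕ) : ℤ) - l = -((m:ℤ)+1) := by omega
    rw [hg]
    simp only [e]
  have pos_part : ∑ t ∈ Finset.Ico (l+1) (2*l+1), g t
      = ∑ m ∈ Finset.range l, sphY l ((m:ℤ)+1) θ φ ^ 2 := by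
    rw [Finset.sum_Ico_eq_sum_range]
    have e : 2*l+1 - (l+1) = l := by omega
    rw [e]
    apply Finset.sum_congr rfl
    intro m _
    have e2 : ((l + 1 + m : ℕ) : ℤ) - l = (m:ℤ)+1 := by omega
    rw [hg]
    simp only [e2]
  have gl : g l = (2 * l + 1) * ((Q l 0).eval (Real.cos θ)) ^ 2 := by
    rw [hg]
    simp only [sub_self]
    exact sphY_zero_sq l θ φ
  have pairs : ∀ m ∈ Finset.range l,
      sphY l (-((m:ℤ)+1)) θ φ ^ 2 + sphY l ((m:ℤ)+1) θ φ ^ 2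
      = (2*(2*(l:ℝ)+1)) * (cm l (m+1) * (1 - Real.cos θ ^ 2) ^ (m+1)
          * ((Q l (m+1)).eval (Real.cos θ)) ^ 2) := by
    intro m _
    rw [add_comm, sphY_pair_sq]
    push_cast
    ring
  have recomb : (∑ m ∈ Finset.range l, sphY l (-((m:ℤ)+1)) θ φ ^ 2)
      + (2 * (l:ℝ) + 1) * ((Q l 0).eval (Real.cos θ)) ^ 2
      + ∑ m ∈ Finset.range l, sphY l ((m:ℤ)+1) θ φ ^ 2
      = (2 * (l:ℝ) + 1) * ((Q l 0).eval (Real.cos θ)) ^ 2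
        + ∑ m ∈ Finset.range l,
            (sphY l (-((m:ℤ)+1)) θ φ ^ 2 + sphY l ((m:ℤ)+1) θ φ ^ 2) := by
    rw [Finset.sum_add_distrib]
    ring
  rw [split, neg_part, pos_part, gl]
  push_cast
  rw [recomb, Finset.sum_congr rfl pairs, ← Finset.mul_sum]
  have hSI := sum_identity l (Real.cos θ)
  linear_combination (2*(l:ℝ)+1) * hSI

end PhiAux2

section Glue
open PhiAux PhiAux2 Polynomial

lemma sqrt_helper (l t : ℕ) (ht : t ≤ 2*l) : Nat.sqrt (l*l + t) = l := by
  have h1 : l ≤ Nat.sqrt (l*l+t) := Nat.le_sqrt.mpr (by omega)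
  have h2 : Nat.sqrt (l*l+t) < l+1 := Nat.sqrt_lt.mpr (by nlinarith)
  omega

lemma degree_block_sum (d l : ℕ) (hld : l ≤ d) (θ φ : ℝ) :
    ∑ j ∈ Finset.univ.filter (fun j : Fin ((d+1)^2) => Nat.sqrt (j:ℕ) = l),
      fvec d j θ φ ^ 2 = 2*(l:ℝ)+1 := by
  have hN : 0 < (d+1)^2 := by positivity
  have hbound : ∀ t, t < 2*l+1 → l*l + t < (d+1)^2 := by intro t ht; nlinarith
  have key : ∑ j ∈ Finset.univ.filter (fun j : Fin ((d+1)^2) => Nat.sqrt (j:ℕ) = l),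
      fvec d j θ φ ^ 2 = ∑ t ∈ Finset.range (2*l+1), sphY l ((t:ℤ) - l) θ φ ^ 2 := by
    apply Finset.sum_nbij' (i := fun j : Fin ((d+1)^2) => (j:ℕ) - l*l)
      (j := fun t : ℕ => (⟨(l*l+t) % ((d+1)^2), Nat.mod_lt _ hN⟩ : Fin ((d+1)^2)))
    · intro a ha
      simp only [Finset.mem_filter, Finset.mem_univ, true_and] at ha
      have hle : l*l ≤ (a:ℕ) := by have := Nat.sqrt_le (a:ℕ); rw [ha] at this; exact this
      have hlt : (a:ℕ) < (l+1)*(l+1) := by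
        have := Nat.lt_succ_sqrt (a:ℕ); rw [ha] at this; exact this
      have hlt2 : (a:ℕ) < l*l + (2*l+1) := by nlinarith
      simp only [Finset.mem_range]
      omega
    · intro t ht
      simp only [Finset.mem_range] at ht
      simp only [Finset.mem_filter, Finset.mem_univ, true_and]
      show Nat.sqrt ((l*l+t) % ((d+1)^2)) = l
      rw [Nat.mod_eq_of_lt (hbound t ht)]
      exact sqrt_helper l t (by omega)
    · intro a ha
      simp only [Finset.mem_filter, Finset.mem_univ, true_and] at ha
      have hle : l*l ≤ (a:ℕ) := by have := Nat.sqrt_le (a:ℕ); rw [ha] at this; exact this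
      apply Fin.ext
      show (l*l + ((a:ℕ) - l*l)) % ((d+1)^2) = (a:ℕ)
      rw [Nat.add_sub_cancel' hle, Nat.mod_eq_of_lt a.isLt]
    · intro t ht
      simp only [Finset.mem_range] at ht
      show ((l*l+t) % ((d+1)^2) : ℕ) - l*l = t
      rw [Nat.mod_eq_of_lt (hbound t ht)]
      omega
    · intro a ha
      simp only [Finset.mem_filter, Finset.mem_univ, true_and] at ha
      have hle : l*l ≤ (a:ℕ) := by have := Nat.sqrt_le (a:ℕ); rw [ha] at this; exact this
      show (sphY (Nat.sqrt (a:ℕ)) ((a:ℤ) - (Nat.sqrt (a:ℕ) : ℤ)^2 - (Nat.sqrt (a:ℕ):ℤ)) θ φ) ^ 2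
          = sphY l (((((a:ℕ) - l*l : ℕ)):ℤ) - l) θ φ ^ 2
      rw [ha]
      have harg : ((a:ℕ):ℤ) - (l:ℤ)^2 - (l:ℤ) = ((((a:ℕ) - l*l : ℕ)):ℤ) - l := by
        have h2 : ((l:ℤ))^2 = ((l*l : ℕ):ℤ) := by push_cast; ring
        rw [h2]
        generalize hb : l*l = b at hle ⊢
        omega
      rw [harg]
  rw [key, sphY_block]

lemma fvec_sq_sum (d q : ℕ) (k : Fin (q + 1) → ℕ)
    (hk : StrictMono k) (hkd : ∀ i, k i ≤ d)
    (s : ℕ) (hs : s = ∑ i, (2 * k i + 1))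
    (σ : Fin s → Fin ((d + 1) ^ 2)) (hσ : Function.Injective σ)
    (hrange : ∀ j : Fin ((d + 1) ^ 2), (∃ c, σ c = j) ↔ ∃ i, Nat.sqrt (j : ℕ) = k i)
    (θ φ : ℝ) : ∑ c : Fin s, fvec d (σ c) θ φ ^ 2 = (s:ℝ) := by
  classical
  have h1 : ∑ c : Fin s, fvec d (σ c) θ φ ^ 2
      = ∑ j ∈ Finset.univ.image σ, fvec d j θ φ ^ 2 :=
    (Finset.sum_image (g := σ) (f := fun j => fvec d j θ φ ^ 2)
      (s := Finset.univ) (fun a _ b _ h => hσ h)).symm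
  have himg : (Finset.univ.image σ)
      = Finset.univ.filter (fun j : Fin ((d+1)^2) => ∃ i, Nat.sqrt (j:ℕ) = k i) := by
    ext j
    simp only [Finset.mem_image, Finset.mem_filter, Finset.mem_univ, true_and]
    exact hrange j
  have hpart : Finset.univ.filter (fun j : Fin ((d+1)^2) => ∃ i, Nat.sqrt (j:ℕ) = k i)
      = Finset.univ.biUnion (fun i : Fin (q+1) =>
          Finset.univ.filter (fun j : Fin ((d+1)^2) => Nat.sqrt (j:ℕ) = k i)) := by
    ext j
    simp [Finset.mem_biUnion]
  have hdisj : ∀ i ∈ Finset.univ, ∀ i' ∈ (Finset.univ : Finset (Fin (q+1))), i ≠ i' →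
      Disjoint (Finset.univ.filter (fun j : Fin ((d+1)^2) => Nat.sqrt (j:ℕ) = k i))
        (Finset.univ.filter (fun j : Fin ((d+1)^2) => Nat.sqrt (j:ℕ) = k i')) := by
    intro i _ i' _ hne
    rw [Finset.disjoint_left]
    intro j hj hj'
    simp only [Finset.mem_filter, Finset.mem_univ, true_and] at hj hj'
    exact hne (hk.injective (hj ▸ hj'))
  rw [h1, himg, hpart, Finset.sum_biUnion hdisj,
    Finset.sum_congr rfl (fun i _ => degree_block_sum d (k i) (hkd i) θ φ), hs]
  push_cast
  ring

lemma cs_of_quadratic {n : Type*} [Fintype n] (M : Matrix n n ℝ)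
    (hsymm : ∀ x y, dotProduct x (M.mulVec y) = dotProduct y (M.mulVec x))
    (hpos : ∀ x, 0 ≤ dotProduct x (M.mulVec x)) (x y : n → ℝ) :
    (dotProduct x (M.mulVec y))^2
      ≤ (dotProduct x (M.mulVec x)) * (dotProduct y (M.mulVec y)) := by
  have expand : ∀ t : ℝ,
      0 ≤ (dotProduct y (M.mulVec y)) * (t*t)
        + (2 * dotProduct x (M.mulVec y)) * t + dotProduct x (M.mulVec x) := by
    intro t
    have h := hpos (x + t • y)
    have hs := hsymm y x
    have e : dotProduct (x + t • y) (M.mulVec (x + t • y))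
        = dotProduct x (M.mulVec x) + 2*t*(dotProduct x (M.mulVec y))
          + t*t*(dotProduct y (M.mulVec y)) := by
      simp only [Matrix.mulVec_add, Matrix.mulVec_smul, add_dotProduct,
        smul_dotProduct, dotProduct_add, dotProduct_smul, smul_eq_mul]
      rw [hs]
      ring
    rw [e] at h
    linarith
  have hd := discrim_le_zero expand
  rw [discrim] at hd
  nlinarith [hd]

lemma scalar_part (s : ℕ) (hs1 : 1 ≤ s) (lam : Fin s → ℝ) (hpos : ∀ i, 0 < lam i)
    (hsum : ∑ i, (lam i)⁻¹ ≤ (s:ℝ)) (p : ℝ) (hp : p < 1) :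
    (p ≠ 0 → (∑ i, (lam i) ^ (-p)) ^ (1/p) ≤ (s:ℝ) ^ (1/p)) ∧
    (1:ℝ) ≤ (∏ i, lam i) ∧ ∃ i, (1:ℝ) ≤ lam i := by
  have hspos : (0:ℝ) < s := by exact_mod_cast hs1
  haveI : Nonempty (Fin s) := ⟨⟨0, by omega⟩⟩
  have hw : ∑ _i : Fin s, (s:ℝ)⁻¹ = 1 := by
    rw [Finset.sum_const, Finset.card_univ, Fintype.card_fin, nsmul_eq_mul,
      mul_inv_cancel₀ (ne_of_gt hspos)]
  have hPpos : 0 < ∏ i, lam i := Finset.prod_pos (fun i _ => hpos i)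
  -- product ≥ 1
  have hprod : (1:ℝ) ≤ ∏ i, lam i := by
    by_contra hlt
    push_neg at hlt
    have hgm := Real.geom_mean_le_arith_mean_weighted Finset.univ (fun _ => (s:ℝ)⁻¹)
      (fun i => (lam i)⁻¹) (fun i _ => by positivity) hw
      (fun i _ => inv_nonneg.mpr (le_of_lt (hpos i)))
    rw [Real.finset_prod_rpow Finset.univ _
      (fun i _ => inv_nonneg.mpr (le_of_lt (hpos i)))] at hgm
    have h1 : ∑ i : Fin s, (s:ℝ)⁻¹ * (lam i)⁻¹ ≤ 1 := by
      rw [← Finset.mul_sum]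
      calc (s:ℝ)⁻¹ * ∑ i, (lam i)⁻¹ ≤ (s:ℝ)⁻¹ * s := by
            apply mul_le_mul_of_nonneg_left hsum (by positivity)
        _ = 1 := inv_mul_cancel₀ (ne_of_gt hspos)
    have h2 : (∏ i, (lam i)⁻¹) = (∏ i, lam i)⁻¹ := by
      rw [← Finset.prod_inv_distrib]
    rw [h2] at hgm
    have h3 : (1:ℝ) < (∏ i, lam i)⁻¹ := by
      rw [lt_inv_comm₀] <;> simp [hPpos, hlt]
    have h4 : (1:ℝ) < ((∏ i, lam i)⁻¹) ^ ((s:ℝ)⁻¹) :=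
      (Real.one_lt_rpow_iff_of_pos (by positivity)).mpr (Or.inl ⟨h3, by positivity⟩)
    linarith
  refine ⟨?_, hprod, ?_⟩
  · intro hp0
    rcases lt_or_gt_of_ne hp0 with hneg | hposp
    · -- p < 0
      have hr : 0 < -p := by linarith
      have hgm := Real.geom_mean_le_arith_mean_weighted Finset.univ (fun _ => (s:ℝ)⁻¹)
        (fun i => lam i ^ (-p)) (fun i _ => by positivity) hw
        (fun i _ => Real.rpow_nonneg (le_of_lt (hpos i)) _)
      have e1 : ∀ i ∈ Finset.univ, (lam i ^ (-p)) ^ ((s:ℝ)⁻¹) = lam i ^ ((-p) * (s:ℝ)⁻¹) := by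
        intro i _
        rw [← Real.rpow_mul (le_of_lt (hpos i))]
      rw [Finset.prod_congr rfl e1,
        Real.finset_prod_rpow Finset.univ _ (fun i _ => le_of_lt (hpos i))] at hgm
      have h5 : (1:ℝ) ≤ (∏ i, lam i) ^ ((-p) * (s:ℝ)⁻¹) :=
        Real.one_le_rpow hprod (mul_nonneg (le_of_lt hr) (by positivity))
      have h6 : (1:ℝ) ≤ ∑ i, (s:ℝ)⁻¹ * lam i ^ (-p) := le_trans h5 hgm
      have h7 : (s:ℝ) ≤ ∑ i, lam i ^ (-p) := by
        rw [← Finset.mul_sum] at h6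
        calc (s:ℝ) = (s:ℝ) * 1 := by ring
          _ ≤ (s:ℝ) * ((s:ℝ)⁻¹ * ∑ i, lam i ^ (-p)) :=
              mul_le_mul_of_nonneg_left h6 (le_of_lt hspos)
          _ = ((s:ℝ) * (s:ℝ)⁻¹) * ∑ i, lam i ^ (-p) := by ring
          _ = ∑ i, lam i ^ (-p) := by rw [mul_inv_cancel₀ (ne_of_gt hspos), one_mul]
      exact Real.rpow_le_rpow_of_nonpos hspos h7
        (by rw [one_div]; exact inv_nonpos.mpr (le_of_lt hneg))
    · -- 0 < p < 1
      have hub : ∀ i, lam i ^ (-p) ≤ p * (lam i)⁻¹ + (1 - p) := by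
        intro i
        have h := Real.geom_mean_le_arith_mean2_weighted (le_of_lt hposp)
          (by linarith : (0:ℝ) ≤ 1 - p) (inv_nonneg.mpr (le_of_lt (hpos i)))
          zero_le_one (by ring)
        rw [Real.one_rpow, mul_one, mul_one] at h
        calc lam i ^ (-p) = ((lam i)⁻¹) ^ p := by
              rw [Real.inv_rpow (le_of_lt (hpos i)), ← Real.rpow_neg (le_of_lt (hpos i))]
          _ ≤ p * (lam i)⁻¹ + (1 - p) := h
      have hsum2 : ∑ i, lam i ^ (-p) ≤ (s:ℝ) := by
        calc ∑ i, lam i ^ (-p) ≤ ∑ i, (p * (lam i)⁻¹ + (1 - p)) :=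
              Finset.sum_le_sum (fun i _ => hub i)
          _ = p * (∑ i, (lam i)⁻¹) + (1 - p) * s := by
              rw [Finset.sum_add_distrib, ← Finset.mul_sum, Finset.sum_const,
                Finset.card_univ, Fintype.card_fin, nsmul_eq_mul]
              ring
          _ ≤ p * s + (1 - p) * s := by nlinarith
          _ = s := by ring
      exact Real.rpow_le_rpow (Finset.sum_nonneg (fun i _ =>
        Real.rpow_nonneg (le_of_lt (hpos i)) _)) hsum2 (by positivity)
  · by_contra hno
    push_neg at hno
    have : ∑ i : Fin s, (1:ℝ) < ∑ i, (lam i)⁻¹ := by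
      apply Finset.sum_lt_sum_of_nonempty Finset.univ_nonempty
      intro i _
      have h1 := hpos i
      have h2 := hno i
      nlinarith [mul_inv_cancel₀ (ne_of_gt h1), inv_pos.mpr h1]
    rw [Finset.sum_const, Finset.card_univ, Fintype.card_fin, nsmul_eq_mul, mul_one] at this
    linarith

end Glue

end AuxProofs

/-- Φ_p-optimality of the uniform distribution on the sphere: for every `p ∈ [-∞, 1)` and
every block selection matrix `K = K_{k₀,…,k_q}`, any design `ξ` on `[0,π] × (-π,π]` with
`range K ⊆ range M(ξ)` satisfies `Φ_p(ξ) ≤ Φ_p(ξ*) = s^{1/p}`, where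
`Φ_p(ξ) = (tr((Kᵀ M⁻(ξ) K)^{-p}))^{1/p}` is expressed via the eigenvalues of
`C = Kᵀ M⁻(ξ) K`; the cases `p = 0` (D-criterion, `det C ≥ 1`) and `p = -∞`
(E-criterion, `λ_max(C) ≥ 1`) are included. -/

theorem phi_p_optimality (d q : ℕ) (k : Fin (q + 1) → ℕ)
    (hk : StrictMono k) (hkd : ∀ i, k i ≤ d)
    (s : ℕ) (hs : s = ∑ i, (2 * k i + 1))
    (σ : Fin s → Fin ((d + 1) ^ 2)) (hσ : Function.Injective σ)
    (hrange : ∀ j : Fin ((d + 1) ^ 2), (∃ c, σ c = j) ↔ ∃ i, Nat.sqrt (j : ℕ) = k i)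
    (K : Matrix (Fin ((d + 1) ^ 2)) (Fin s) ℝ)
    (hK : ∀ i c, K i c = if i = σ c then 1 else 0)
    (ξ : Measure (ℝ × ℝ)) [IsProbabilityMeasure ξ]
    (hsupp : ξ ((Set.Icc (0 : ℝ) π ×ˢ Set.Ioc (-π) π)ᶜ) = 0)
    (hint : ∀ i j, Integrable (fun z : ℝ × ℝ => fvec d i z.1 z.2 * fvec d j z.1 z.2) ξ)
    (Minv : Matrix (Fin ((d + 1) ^ 2)) (Fin ((d + 1) ^ 2)) ℝ)
    (hg : infoMat d ξ * Minv * infoMat d ξ = infoMat d ξ)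
    (hrangeK : ∀ v : Fin ((d + 1) ^ 2) → ℝ,
      (∃ u, K.mulVec u = v) → ∃ u, (infoMat d ξ).mulVec u = v)
    (C : Matrix (Fin s) (Fin s) ℝ) (hCdef : C = Kᵀ * Minv * K)
    (hC : C.IsHermitian) (p : ℝ) (hp : p < 1) :
    (p ≠ 0 → (∑ i, (hC.eigenvalues i) ^ (-p)) ^ (1 / p) ≤ (s : ℝ) ^ (1 / p)) ∧
    (1 : ℝ) ≤ C.det ∧
    ∃ i, (1 : ℝ) ≤ hC.eigenvalues i := by
  classical
  set M : Matrix (Fin ((d+1)^2)) (Fin ((d+1)^2)) ℝ := infoMat d ξ with hM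
  set D : Matrix (Fin s) (Fin s) ℝ := Kᵀ * M * K with hD
  -- s ≥ 1
  have hs1 : 1 ≤ s := by
    rw [hs]
    calc 1 ≤ 2 * k 0 + 1 := by omega
      _ ≤ ∑ i : Fin (q+1), (2 * k i + 1) :=
          Finset.single_le_sum (f := fun i : Fin (q+1) => 2 * k i + 1)
            (fun i _ => Nat.zero_le _) (Finset.mem_univ 0)
  -- symmetry of M
  have hMt : Mᵀ = M := by
    ext i j
    show (∫ z, fvec d j z.1 z.2 * fvec d i z.1 z.2 ∂ξ) = ∫ z, fvec d i z.1 z.2 * fvec d j z.1 z.2 ∂ξ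
    simp_rw [mul_comm]
  -- quadratic form of M as an integral
  have hquad : ∀ v w : Fin ((d+1)^2) → ℝ, v ⬝ᵥ M *ᵥ w
      = ∫ z, (∑ i, v i * fvec d i z.1 z.2) * (∑ j, w j * fvec d j z.1 z.2) ∂ξ := by
    intro v w
    have h0 : ∀ z : ℝ × ℝ, (∑ i, v i * fvec d i z.1 z.2) * (∑ j, w j * fvec d j z.1 z.2)
        = ∑ i, ∑ j, (v i * w j) * (fvec d i z.1 z.2 * fvec d j z.1 z.2) := by
      intro z
      rw [Finset.sum_mul_sum]
      refine Finset.sum_congr rfl (fun i _ => Finset.sum_congr rfl (fun j _ => by ring))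
    calc v ⬝ᵥ M *ᵥ w = ∑ i, ∑ j, (v i * w j) * M i j := by
          simp only [dotProduct, Matrix.mulVec, Finset.mul_sum]
          refine Finset.sum_congr rfl (fun i _ => Finset.sum_congr rfl (fun j _ => by
            show v i * (M i j * w j) = (v i * w j) * M i j
            ring))
      _ = ∑ i, ∑ j, ∫ z, (v i * w j) * (fvec d i z.1 z.2 * fvec d j z.1 z.2) ∂ξ := by
          refine Finset.sum_congr rfl (fun i _ => Finset.sum_congr rfl (fun j _ => ?_))
          rw [MeasureTheory.integral_const_mul]
          rfl
      _ = ∫ z, ∑ i, ∑ j, (v i * w j) * (fvec d i z.1 z.2 * fvec d j z.1 z.2) ∂ξ := by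
          rw [MeasureTheory.integral_finset_sum _ (fun i _ =>
            MeasureTheory.integrable_finset_sum _ (fun j _ => (hint i j).const_mul _))]
          refine Finset.sum_congr rfl (fun i _ => ?_)
          rw [MeasureTheory.integral_finset_sum _ (fun j _ => (hint i j).const_mul _)]
      _ = ∫ z, (∑ i, v i * fvec d i z.1 z.2) * (∑ j, w j * fvec d j z.1 z.2) ∂ξ := by
          congr 1
          funext z
          exact (h0 z).symm
  have hsymm : ∀ x y : Fin ((d+1)^2) → ℝ, x ⬝ᵥ M *ᵥ y = y ⬝ᵥ M *ᵥ x := by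
    intro x y
    rw [hquad, hquad]
    congr 1
    funext z
    ring
  have hMpos : ∀ x : Fin ((d+1)^2) → ℝ, 0 ≤ x ⬝ᵥ M *ᵥ x := by
    intro x
    rw [hquad]
    exact MeasureTheory.integral_nonneg (fun z => mul_self_nonneg _)
  -- K is an isometry on columns
  have hKtK : Kᵀ * K = 1 := by
    ext c c'
    rw [Matrix.mul_apply]
    simp only [Matrix.transpose_apply, hK]
    simp only [ite_mul, mul_ite, one_mul, mul_one, zero_mul, mul_zero,
      Matrix.one_apply, hσ.eq_iff, Finset.sum_ite_eq, Finset.mem_univ, if_true]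
    rw [Finset.sum_ite_eq' Finset.univ (σ c') (fun x => if x = σ c then (1:ℝ) else 0),
      if_pos (Finset.mem_univ _)]
    by_cases h : c = c'
    · simp [h]
    · rw [if_neg (fun hh => h (hσ hh).symm), if_neg h]
  have hdotK : ∀ a b : Fin s → ℝ, (K *ᵥ a) ⬝ᵥ (K *ᵥ b) = a ⬝ᵥ b := by
    intro a b
    rw [Matrix.dotProduct_mulVec, ← Matrix.vecMul_transpose, Matrix.vecMul_vecMul,
      hKtK, Matrix.vecMul_one]
  have hKM : ∀ (a : Fin s → ℝ) (b : Fin ((d+1)^2) → ℝ),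
      (K *ᵥ a) ⬝ᵥ b = a ⬝ᵥ (Kᵀ *ᵥ b) := by
    intro a b
    rw [Matrix.dotProduct_mulVec, Matrix.vecMul_transpose]
  have hMdot : ∀ (u x : Fin ((d+1)^2) → ℝ), (M *ᵥ u) ⬝ᵥ x = u ⬝ᵥ (M *ᵥ x) := by
    intro u x
    have h := Matrix.vecMul_transpose M u
    rw [hMt] at h
    rw [← h, ← Matrix.dotProduct_mulVec]
  -- quadratic form of C via generalized inverse
  have hCform : ∀ w : Fin s → ℝ, ∃ u, M *ᵥ u = K *ᵥ w ∧ w ⬝ᵥ C *ᵥ w = u ⬝ᵥ M *ᵥ u := by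
    intro w
    obtain ⟨u, hu⟩ := hrangeK (K *ᵥ w) ⟨w, rfl⟩
    refine ⟨u, hu, ?_⟩
    rw [hCdef, ← Matrix.mulVec_mulVec, ← Matrix.mulVec_mulVec, ← hKM, ← hu, hMdot,
      Matrix.mulVec_mulVec, Matrix.mulVec_mulVec, hg]
  -- quadratic form of D
  have hDform : ∀ z : Fin s → ℝ, z ⬝ᵥ D *ᵥ z = (K *ᵥ z) ⬝ᵥ (M *ᵥ (K *ᵥ z)) := by
    intro z
    rw [hD, ← Matrix.mulVec_mulVec, ← Matrix.mulVec_mulVec, ← hKM]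
  -- the key Cauchy-Schwarz style inequality
  have keyCS : ∀ z w : Fin s → ℝ,
      (w ⬝ᵥ z)^2 ≤ (w ⬝ᵥ C *ᵥ w) * (z ⬝ᵥ D *ᵥ z) := by
    intro z w
    obtain ⟨u, hu, hq⟩ := hCform w
    have h1 : w ⬝ᵥ z = u ⬝ᵥ (M *ᵥ (K *ᵥ z)) := by
      rw [← hdotK w z, ← hu, hMdot]
    rw [h1, hq, hDform]
    have h2 := cs_of_quadratic M hsymm hMpos u (K *ᵥ z)
    have h3 : (K *ᵥ z) ⬝ᵥ (M *ᵥ (K *ᵥ z)) = dotProduct (K *ᵥ z) (M.mulVec (K *ᵥ z)) := rfl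
    exact h2.trans_eq (by rw [h3])
  -- eigenvalues and eigenvectors
  set lam : Fin s → ℝ := hC.eigenvalues with hlamdef
  set v : Fin s → (Fin s → ℝ) :=
    fun i => (WithLp.equiv 2 (Fin s → ℝ)) (hC.eigenvectorBasis i) with hvdef
  have hme : ∀ i, C *ᵥ (v i) = lam i • v i := fun i => hC.mulVec_eigenvectorBasis i
  have hortho := orthonormal_iff_ite.mp hC.eigenvectorBasis.orthonormal
  have hvv : ∀ i j, (v i) ⬝ᵥ (v j) = if i = j then (1:ℝ) else 0 := by
    intro i j
    have h := hortho i j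
    simp only [PiLp.inner_apply, RCLike.inner_apply, starRingEnd_apply, star_trivial] at h
    rw [dotProduct]
    convert h using 2
    exact mul_comm _ _
  have hCquad : ∀ i, (v i) ⬝ᵥ (C *ᵥ (v i)) = lam i := by
    intro i
    rw [hme i, dotProduct_smul, smul_eq_mul, hvv i i]
    simp
  -- trace identity via the orthogonal eigenvector matrix
  set V : Matrix (Fin s) (Fin s) ℝ := Matrix.of (fun i j => v i j) with hVdef
  have hVVt : V * Vᵀ = 1 := by
    ext i j
    have h := hvv i j
    simpa [Matrix.mul_apply, dotProduct, Matrix.one_apply, hVdef] using h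
  have hVtV : Vᵀ * V = 1 := mul_eq_one_comm.mp hVVt
  have hsum_t : ∑ i, (v i) ⬝ᵥ (D *ᵥ (v i)) = D.trace := by
    have h1 : ∀ i, (v i) ⬝ᵥ (D *ᵥ (v i)) = (V * D * Vᵀ) i i := by
      intro i
      simp only [Matrix.mul_apply, dotProduct, Matrix.mulVec, Matrix.transpose_apply,
        Matrix.of_apply, Finset.mul_sum, Finset.sum_mul]
      rw [Finset.sum_comm]
      exact Finset.sum_congr rfl (fun a _ => Finset.sum_congr rfl (fun b _ => by
        rw [hVdef]; simp only [Matrix.of_apply]; ring))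
    have h2 : (V * D * Vᵀ).trace = D.trace := by
      rw [Matrix.trace_mul_comm, ← Matrix.mul_assoc, hVtV, Matrix.one_mul]
    rw [← h2, Matrix.trace]
    exact Finset.sum_congr rfl (fun i _ => h1 i)
  -- trace D = s
  have hDtrace : D.trace = (s:ℝ) := by
    have hDcc : ∀ c, D c c = M (σ c) (σ c) := by
      intro c
      rw [hD, Matrix.mul_apply]
      have : ∀ j, (Kᵀ * M) c j * K j c = (if j = σ c then (Kᵀ * M) c j else 0) := by
        intro j
        rw [hK]
        by_cases hj : j = σ c <;> simp [hj]
      rw [Finset.sum_congr rfl (fun j _ => this j), Finset.sum_ite_eq' _ (σ c), if_pos (Finset.mem_univ _)]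
      rw [Matrix.mul_apply]
      have : ∀ i, Kᵀ c i * M i (σ c) = (if i = σ c then M i (σ c) else 0) := by
        intro i
        rw [Matrix.transpose_apply, hK]
        by_cases hi : i = σ c <;> simp [hi]
      rw [Finset.sum_congr rfl (fun i _ => this i), Finset.sum_ite_eq' _ (σ c), if_pos (Finset.mem_univ _)]
    have hint2 : ∀ c : Fin s, Integrable (fun z : ℝ × ℝ => fvec d (σ c) z.1 z.2 ^ 2) ξ := by
      intro c
      have := hint (σ c) (σ c)
      simpa [sq] using this
    have hMcc : ∀ c : Fin s, M (σ c) (σ c) = ∫ z, fvec d (σ c) z.1 z.2 ^ 2 ∂ξ := by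
      intro c
      show (∫ z, fvec d (σ c) z.1 z.2 * fvec d (σ c) z.1 z.2 ∂ξ) = _
      congr 1
      funext z
      rw [sq]
    rw [Matrix.trace]
    calc ∑ c, D.diag c = ∑ c : Fin s, ∫ z, fvec d (σ c) z.1 z.2 ^ 2 ∂ξ := by
          refine Finset.sum_congr rfl (fun c _ => ?_)
          rw [Matrix.diag_apply, hDcc c, hMcc c]
      _ = ∫ z, ∑ c : Fin s, fvec d (σ c) z.1 z.2 ^ 2 ∂ξ :=
          (MeasureTheory.integral_finset_sum _ (fun c _ => hint2 c)).symm
      _ = ∫ _z, (s:ℝ) ∂ξ := by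
          congr 1
          funext z
          exact fvec_sq_sum d q k hk hkd s hs σ hσ hrange z.1 z.2
      _ = (s:ℝ) := by
          rw [MeasureTheory.integral_const, probReal_univ, one_smul]
  -- per-eigenvalue bounds
  have hvnorm : ∀ i, (v i) ⬝ᵥ (v i) = 1 := by
    intro i
    rw [hvv i i, if_pos rfl]
  have hDpos : ∀ i, 0 ≤ (v i) ⬝ᵥ (D *ᵥ (v i)) := by
    intro i
    rw [hDform]
    have := hMpos (K *ᵥ v i)
    exact this
  have hkey : ∀ i, 1 ≤ lam i * ((v i) ⬝ᵥ (D *ᵥ (v i))) := by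
    intro i
    have h := keyCS (v i) (v i)
    rw [hvnorm i, hCquad i] at h
    simpa using h
  have hlampos : ∀ i, 0 < lam i := by
    intro i
    by_contra hle
    push_neg at hle
    have h1 := hkey i
    have h2 := hDpos i
    nlinarith
  have hinv_le : ∀ i, (lam i)⁻¹ ≤ (v i) ⬝ᵥ (D *ᵥ (v i)) := by
    intro i
    rw [inv_eq_one_div, div_le_iff₀ (hlampos i)]
    have := hkey i
    linarith [mul_comm (lam i) ((v i) ⬝ᵥ (D *ᵥ (v i)))]
  have hsum_inv : ∑ i, (lam i)⁻¹ ≤ (s:ℝ) := by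
    calc ∑ i, (lam i)⁻¹ ≤ ∑ i, (v i) ⬝ᵥ (D *ᵥ (v i)) :=
          Finset.sum_le_sum (fun i _ => hinv_le i)
      _ = D.trace := hsum_t
      _ = (s:ℝ) := hDtrace
  obtain ⟨hA, hB, hE⟩ := scalar_part s hs1 lam hlampos hsum_inv p hp
  refine ⟨hA, ?_, hE⟩
  rw [hC.det_eq_prod_eigenvalues]
  exact_mod_cast hB
end

section
/- Minimal-support characterization: among all probability measures η = Σ_{j=1}^N w_j δ_{x_j} on [−1,1] satisfying Σ_j w_j x_j^ℓ = (1/2)∫_{−1}^1 x^ℓ dx for ℓ = 0,...,n, the minimal value of u(η) = min{v ≥ 0 : supp η ⊆ [−v, v]} equals |x_1*|, where x_1* is the smallest zero of the Legendre polynomial P_r with r = ⌊n/2⌋ + 1; the minimum is attained by the Gauss–Legendre quadrature measure supported at the zeros of P_r. -/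
open MeasureTheory Real

open Polynomial

-- integrability of polynomial eval
lemma poly_ii (p : Polynomial ℝ) (a b : ℝ) :
    IntervalIntegrable (fun t => p.eval t) volume a b :=
  p.continuous.intervalIntegrable a b

-- integration by parts for polynomials
lemma poly_ibp (p q : Polynomial ℝ) (a b : ℝ) :
    ∫ t in a..b, (p.derivative.eval t * q.eval t + p.eval t * q.derivative.eval t)
      = p.eval b * q.eval b - p.eval a * q.eval a := by
  apply intervalIntegral.integral_deriv_mul_eq_sub
  · intro x _; exact p.hasDerivAt x
  · intro x _; exact q.hasDerivAt x
  · exact poly_ii _ _ _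
  · exact poly_ii _ _ _

lemma poly_ibp' (p q : Polynomial ℝ) (a b : ℝ)
    (h1 : p.eval a = 0) (h2 : p.eval b = 0) :
    ∫ t in a..b, p.derivative.eval t * q.eval t
      = - ∫ t in a..b, p.eval t * q.derivative.eval t := by
  have h := poly_ibp p q a b
  rw [intervalIntegral.integral_add (f := fun t => p.derivative.eval t * q.eval t) (g := fun t => p.eval t * q.derivative.eval t) ((p.derivative.continuous.mul q.continuous).intervalIntegrable a b) ((p.continuous.mul q.derivative.continuous).intervalIntegrable a b)] at h
  rw [h1, h2] at h
  linarith

-- if (X - a)^(j+1) divides p then the j-th iterated derivative vanishes at a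
lemma eval_iterate_deriv_zero (j : ℕ) : ∀ (p : Polynomial ℝ) (a : ℝ),
    (X - C a) ^ (j + 1) ∣ p → (Polynomial.derivative^[j] p).eval a = 0 := by
  induction j with
  | zero =>
    intro p a ⟨q, hq⟩
    simp [hq]
  | succ j ih =>
    intro p a ⟨q, hq⟩
    rw [Function.iterate_succ_apply]
    apply ih
    subst hq
    rw [derivative_mul, derivative_pow]
    apply dvd_add
    · apply Dvd.dvd.mul_right; apply Dvd.dvd.mul_right; apply Dvd.dvd.mul_left
      exact pow_dvd_pow _ (by omega)
    · exact Dvd.dvd.mul_right (pow_dvd_pow _ (by omega)) _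

-- iterated integration by parts
lemma iter_ibp (m : ℕ) : ∀ (F q : Polynomial ℝ),
    (∀ j < m, (Polynomial.derivative^[j] F).eval 1 = 0 ∧ (Polynomial.derivative^[j] F).eval (-1) = 0) →
    ∫ t in (-1:ℝ)..1, (Polynomial.derivative^[m] F).eval t * q.eval t
      = (-1)^m * ∫ t in (-1:ℝ)..1, F.eval t * (Polynomial.derivative^[m] q).eval t := by
  induction m with
  | zero => intro F q _; simp
  | succ m ih =>
    intro F q hF
    rw [Function.iterate_succ_apply']
    rw [poly_ibp' _ q (-1) 1 (hF m (Nat.lt_succ_self m)).2 (hF m (Nat.lt_succ_self m)).1]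
    rw [ih F q.derivative (fun j hj => hF j (hj.trans (Nat.lt_succ_self m)))]
    rw [Function.iterate_succ_apply]
    ring


lemma base_factor (m : ℕ) : ((X:Polynomial ℝ) ^ 2 - 1) ^ m = (X - C 1)^m * (X + C 1)^m := by
  rw [← mul_pow]; congr 1; ring_nf; simp [sub_eq_add_neg]; ring

lemma boundary_vanish (m : ℕ) (j : ℕ) (hj : j < m) :
    (Polynomial.derivative^[j] (((X:Polynomial ℝ) ^ 2 - 1) ^ m)).eval 1 = 0 ∧
    (Polynomial.derivative^[j] (((X:Polynomial ℝ) ^ 2 - 1) ^ m)).eval (-1) = 0 := by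
  constructor
  · apply eval_iterate_deriv_zero
    rw [base_factor]
    exact Dvd.dvd.mul_right (pow_dvd_pow _ (by omega)) _
  · apply eval_iterate_deriv_zero
    rw [base_factor]
    have h1 : (X + C (1:ℝ)) = X - C (-1) := by simp [sub_eq_add_neg]
    rw [h1]
    exact Dvd.dvd.mul_left (pow_dvd_pow _ (by omega)) _

-- orthogonality
lemma legendre_ortho (m : ℕ) (q : Polynomial ℝ) (hq : q.natDegree < m) :
    ∫ t in (-1:ℝ)..1, (legendreP m).eval t * q.eval t = 0 := by
  have h := iter_ibp m (((X:Polynomial ℝ) ^ 2 - 1) ^ m) q (fun j hj => boundary_vanish m j hj)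
  rw [Polynomial.iterate_derivative_eq_zero hq] at h
  simp only [legendreP, eval_mul, eval_C, mul_assoc]
  rw [intervalIntegral.integral_const_mul]
  simp only [eval_zero, mul_zero] at h
  simp [h]

lemma natDegree_base (m : ℕ) : (((X:Polynomial ℝ) ^ 2 - 1) ^ m).natDegree = 2 * m := by
  have : (((X:Polynomial ℝ) ^ 2 - 1)).natDegree = 2 := by
    compute_degree!
  rw [natDegree_pow, this]; ring

lemma monic_base (m : ℕ) : (((X:Polynomial ℝ) ^ 2 - 1) ^ m).Monic := by
  apply Polynomial.Monic.pow
  apply Polynomial.monic_X_pow_sub_C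
  norm_num

lemma coeff_dm (m : ℕ) :
    (Polynomial.derivative^[m] (((X:Polynomial ℝ) ^ 2 - 1) ^ m)).coeff m
      = ((2*m).descFactorial m : ℝ) := by
  rw [Polynomial.coeff_iterate_derivative]
  have h2 : m + m = 2 * m := by ring
  rw [h2]
  have : (((X:Polynomial ℝ) ^ 2 - 1) ^ m).coeff (2*m) = 1 := by
    have := (monic_base m).coeff_natDegree
    rwa [natDegree_base] at this
  rw [this]
  simp

lemma natDegree_dm (m : ℕ) :
    (Polynomial.derivative^[m] (((X:Polynomial ℝ) ^ 2 - 1) ^ m)).natDegree = m := by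
  apply le_antisymm
  · have := Polynomial.natDegree_iterate_derivative (((X:Polynomial ℝ) ^ 2 - 1) ^ m) m
    rwa [natDegree_base, two_mul, Nat.add_sub_cancel] at this
  · apply Polynomial.le_natDegree_of_ne_zero
    rw [coeff_dm]
    exact_mod_cast fun h => absurd (Nat.descFactorial_eq_zero_iff_lt.mp h) (by omega)

lemma natDegree_legendre (m : ℕ) : (legendreP m).natDegree = m := by
  rw [legendreP, natDegree_C_mul, natDegree_dm]
  positivity

lemma leadingCoeff_legendre_ne (m : ℕ) : (legendreP m).leadingCoeff ≠ 0 := by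
  rw [Polynomial.leadingCoeff, natDegree_legendre, legendreP, coeff_C_mul, coeff_dm]
  apply mul_ne_zero
  · apply inv_ne_zero; positivity
  · exact_mod_cast fun h => absurd (Nat.descFactorial_eq_zero_iff_lt.mp h) (by omega)

lemma legendre_ne_zero (m : ℕ) : legendreP m ≠ 0 :=
  fun h => leadingCoeff_legendre_ne m (by rw [h, leadingCoeff_zero])

lemma root_of_pow_dvd {q : Polynomial ℝ} {a : ℝ} {s : ℕ} (hs : 1 ≤ s)
    (h : (X - C a) ^ s ∣ q) : q.eval a = 0 := by
  obtain ⟨u, hu⟩ := h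
  subst hu
  simp [eval_pow, zero_pow (by omega : s ≠ 0)]

lemma pow_dvd_deriv {a : ℝ} {p : Polynomial ℝ} (s : ℕ) (h : (X - C a) ^ (s+1) ∣ p) :
    (X - C a) ^ s ∣ p.derivative := by
  obtain ⟨u, hu⟩ := h
  subst hu
  rw [derivative_mul, derivative_pow]
  apply dvd_add
  · apply Dvd.dvd.mul_right; apply Dvd.dvd.mul_right; apply Dvd.dvd.mul_left
    exact pow_dvd_pow _ (by omega)
  · exact Dvd.dvd.mul_right (pow_dvd_pow _ (by omega)) _

lemma rolle_step (q : Polynomial ℝ) (k : ℕ) (z : Fin k → ℝ) (hz : StrictMono z)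
    (hzI : ∀ i, z i ∈ Set.Ioo (-1:ℝ) 1) (hzr : ∀ i, q.eval (z i) = 0)
    (h1 : q.eval 1 = 0) (hm1 : q.eval (-1) = 0) :
    ∃ y : Fin (k+1) → ℝ, StrictMono y ∧ (∀ i, y i ∈ Set.Ioo (-1:ℝ) 1) ∧
      ∀ i, q.derivative.eval (y i) = 0 := by
  set a : ℕ → ℝ := fun j => if h : 1 ≤ j ∧ j ≤ k then z ⟨j-1, by omega⟩
      else if j = 0 then (-1:ℝ) else 1
    with ha_def
  have ha0 : a 0 = -1 := by simp [ha_def]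
  have ha_top : a (k+1) = 1 := by simp [ha_def]
  have ha_mid : ∀ j (h1j : 1 ≤ j) (h2j : j ≤ k), a j = z ⟨j-1, by omega⟩ := by
    intro j h1j h2j; simp [ha_def, h1j, h2j]
  have ha_root : ∀ j ≤ k+1, q.eval (a j) = 0 := by
    intro j hj
    rcases Nat.eq_zero_or_pos j with h | h
    · rw [h, ha0]; exact hm1
    rcases Nat.lt_or_ge j (k+1) with h2 | h2
    · rw [ha_mid j h (by omega)]; exact hzr _
    · have : j = k+1 := by omega
      rw [this, ha_top]; exact h1
  have ha_lt : ∀ j ≤ k, a j < a (j+1) := by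
    intro j hj
    rcases Nat.eq_zero_or_pos j with h | h
    · subst h
      rw [ha0]
      rcases Nat.eq_zero_or_pos k with hk | hk
      · rw [show (0:ℕ)+1 = k+1 by omega, ha_top]; norm_num
      · rw [ha_mid 1 le_rfl (by omega)]
        exact (hzI _).1
    · rw [ha_mid j h hj]
      rcases Nat.lt_or_ge (j+1) (k+1) with h2 | h2
      · rw [ha_mid (j+1) (by omega) (by omega)]
        apply hz
        simp [Fin.lt_def]; omega
      · rw [show j+1 = k+1 by omega, ha_top]
        exact (hzI _).2
  have ha_mono : ∀ i j, i ≤ j → j ≤ k+1 → a i ≤ a j := by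
    intro i j hij hjk
    induction j with
    | zero => simp_all
    | succ j ih =>
      rcases Nat.lt_or_ge i (j+1) with h | h
      · exact le_trans (ih (by omega) (by omega)) (ha_lt j (by omega)).le
      · have : i = j+1 := by omega
        subst this; rfl
  have hroll : ∀ j : Fin (k+1), ∃ c ∈ Set.Ioo (a j.1) (a (j.1+1)),
      q.derivative.eval c = 0 := by
    intro j
    have hlt := ha_lt j.1 (by omega)
    obtain ⟨c, hc, hc2⟩ := exists_deriv_eq_zero (f := fun x => q.eval x) hlt
      q.continuous.continuousOn
      ((ha_root j.1 (by omega)).trans (ha_root (j.1+1) (by omega)).symm)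
    refine ⟨c, hc, ?_⟩
    rwa [Polynomial.deriv] at hc2
  choose y hy1 hy2 using hroll
  refine ⟨y, ?_, ?_, hy2⟩
  · intro i j hij
    calc y i < a (i.1+1) := (hy1 i).2
    _ ≤ a j.1 := ha_mono _ _ (by omega) (by omega)
    _ < y j := (hy1 j).1
  · intro i
    constructor
    · calc (-1:ℝ) = a 0 := ha0.symm
      _ ≤ a i.1 := ha_mono _ _ (by omega) (by omega)
      _ < y i := (hy1 i).1
    · calc y i < a (i.1+1) := (hy1 i).2
      _ ≤ a (k+1) := ha_mono _ _ (by omega) (by omega)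
      _ = 1 := ha_top

lemma roots_aux (m : ℕ) : ∀ k, k ≤ m →
    ∃ z : Fin k → ℝ, StrictMono z ∧ (∀ i, z i ∈ Set.Ioo (-1:ℝ) 1) ∧
      (∀ i, (Polynomial.derivative^[k] (((X:Polynomial ℝ)^2 - 1)^m)).eval (z i) = 0) ∧
      (X - C (1:ℝ)) ^ (m - k) ∣ Polynomial.derivative^[k] (((X:Polynomial ℝ)^2 - 1)^m) ∧
      (X - C (-1:ℝ)) ^ (m - k) ∣ Polynomial.derivative^[k] (((X:Polynomial ℝ)^2 - 1)^m) := by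
  intro k
  induction k with
  | zero =>
    intro _
    refine ⟨Fin.elim0, fun i => i.elim0, fun i => i.elim0, fun i => i.elim0, ?_, ?_⟩
    · simp only [Function.iterate_zero_apply, Nat.sub_zero, base_factor]
      exact Dvd.dvd.mul_right dvd_rfl _
    · simp only [Function.iterate_zero_apply, Nat.sub_zero, base_factor]
      have h1 : (X + C (1:ℝ)) = X - C (-1) := by simp [sub_eq_add_neg]
      rw [h1]
      exact Dvd.dvd.mul_left dvd_rfl _
  | succ k ih =>
    intro hk
    obtain ⟨z, hz, hzI, hzr, hd1, hd2⟩ := ih (by omega)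
    have hd1' : (X - C (1:ℝ)) ^ (m - (k+1)) ∣ Polynomial.derivative^[k+1] (((X:Polynomial ℝ)^2 - 1)^m) := by
      rw [Function.iterate_succ_apply']
      apply pow_dvd_deriv
      have : m - (k+1) + 1 ≤ m - k := by omega
      exact dvd_trans (pow_dvd_pow _ this) hd1
    have hd2' : (X - C (-1:ℝ)) ^ (m - (k+1)) ∣ Polynomial.derivative^[k+1] (((X:Polynomial ℝ)^2 - 1)^m) := by
      rw [Function.iterate_succ_apply']
      apply pow_dvd_deriv
      have : m - (k+1) + 1 ≤ m - k := by omega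
      exact dvd_trans (pow_dvd_pow _ this) hd2
    obtain ⟨y, hy1, hy2, hy3⟩ := rolle_step _ k z hz hzI hzr
      (root_of_pow_dvd (by omega) hd1) (root_of_pow_dvd (by omega) hd2)
    refine ⟨y, hy1, hy2, ?_, hd1', hd2'⟩
    intro i
    rw [Function.iterate_succ_apply']
    exact hy3 i

lemma legendre_roots (m : ℕ) :
    ∃ z : Fin m → ℝ, StrictMono z ∧ (∀ i, z i ∈ Set.Ioo (-1:ℝ) 1) ∧
      (∀ i, (legendreP m).eval (z i) = 0) := by
  obtain ⟨z, h1, h2, h3, _, _⟩ := roots_aux m m le_rfl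
  refine ⟨z, h1, h2, fun i => ?_⟩
  simp [legendreP, h3 i]

lemma legendre_factor (m : ℕ) (z : Fin m → ℝ) (hz : StrictMono z)
    (hr : ∀ i, (legendreP m).eval (z i) = 0) :
    legendreP m = C (legendreP m).leadingCoeff * ∏ i, (X - C (z i)) := by
  set M : Polynomial ℝ := ∏ i, (X - C (z i)) with hM
  have hMmonic : M.Monic := monic_prod_of_monic _ _ (fun i _ => monic_X_sub_C (z i))
  have hMdeg : M.natDegree = m := by
    rw [hM, natDegree_prod _ _ (fun i _ => X_sub_C_ne_zero (z i))]
    simp [natDegree_X_sub_C]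
  have hdvd : M ∣ legendreP m := by
    have : M = ((Finset.univ.val.map z).map fun a => X - C a).prod := by
      rw [hM, Finset.prod, Multiset.map_map]
      rfl
    rw [this]
    rw [Multiset.prod_X_sub_C_dvd_iff_le_roots (legendre_ne_zero m)]
    rw [Multiset.le_iff_count]
    intro a
    by_cases ha : a ∈ Finset.univ.val.map z
    · obtain ⟨i, _, rfl⟩ := Multiset.mem_map.mp ha
      have hnd : (Finset.univ.val.map z).Nodup :=
        Finset.univ.nodup.map hz.injective
      have hc1 : (Finset.univ.val.map z).count (z i) = 1 :=
        Multiset.count_eq_one_of_mem hnd ha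
      rw [hc1, Polynomial.count_roots]
      rw [Nat.one_le_iff_ne_zero, ← Nat.pos_iff_ne_zero]
      exact (Polynomial.rootMultiplicity_pos (legendre_ne_zero m)).mpr (hr i)
    · rw [Multiset.count_eq_zero_of_notMem ha]
      exact Nat.zero_le _
  obtain ⟨u, hu⟩ := hdvd
  have hu0 : u ≠ 0 := by
    intro h; rw [h, mul_zero] at hu; exact legendre_ne_zero m hu
  have hud : u.natDegree = 0 := by
    have := natDegree_legendre m
    rw [hu, natDegree_mul hMmonic.ne_zero hu0, hMdeg] at this
    omega
  have huC : u = C (u.coeff 0) := eq_C_of_natDegree_eq_zero hud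
  have hlc : (legendreP m).leadingCoeff = u.coeff 0 := by
    rw [hu, leadingCoeff_mul, hMmonic.leadingCoeff, one_mul, huC, leadingCoeff_C]
    simp [coeff_C]
  rw [hlc, hu, huC, mul_comm]
  simp [coeff_C]

lemma legendre_root_iff (m : ℕ) (z : Fin m → ℝ) (hz : StrictMono z)
    (hr : ∀ i, (legendreP m).eval (z i) = 0) (t : ℝ) :
    (legendreP m).eval t = 0 ↔ ∃ i, t = z i := by
  constructor
  · intro h
    rw [legendre_factor m z hz hr] at h
    simp only [eval_mul, eval_C, eval_prod, eval_sub, eval_X] at h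
    rcases mul_eq_zero.mp h with h | h
    · exact absurd h (leadingCoeff_legendre_ne m)
    · obtain ⟨i, _, hi⟩ := Finset.prod_eq_zero_iff.mp h
      exact ⟨i, by linarith [sub_eq_zero.mp hi]⟩
  · rintro ⟨i, rfl⟩; exact hr i

lemma iterate_deriv_comp_neg (k : ℕ) (p : Polynomial ℝ) :
    Polynomial.derivative^[k] (p.comp (-X)) = (-1:ℝ)^k • ((Polynomial.derivative^[k] p).comp (-X)) := by
  induction k with
  | zero => simp
  | succ k ih =>
    rw [Function.iterate_succ_apply', ih]
    rw [derivative_smul, derivative_comp]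
    rw [Function.iterate_succ_apply']
    simp only [derivative_neg, derivative_X]
    rw [pow_succ, mul_smul]
    congr 1
    simp

lemma legendre_symm (m : ℕ) (t : ℝ) :
    (legendreP m).eval (-t) = (-1:ℝ)^m * (legendreP m).eval t := by
  have hcomp : (((X:Polynomial ℝ)^2 - 1)^m).comp (-X) = ((X:Polynomial ℝ)^2 - 1)^m := by
    simp [pow_comp, sub_comp, pow_comp, neg_pow, X_comp]
  have key := iterate_deriv_comp_neg m (((X:Polynomial ℝ)^2 - 1)^m)
  rw [hcomp] at key
  have := congrArg (Polynomial.eval t) key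
  rw [eval_smul, eval_comp] at this
  simp only [eval_neg, eval_X, smul_eq_mul] at this
  simp only [legendreP, eval_mul, eval_C]
  rw [this]
  ring_nf
  rw [show m*2 = 2*m from mul_comm m 2, pow_mul]
  norm_num

lemma integral_pos_aux (f : ℝ → ℝ) (hc : Continuous f) (hnn : ∀ t, 0 ≤ f t)
    (c d : ℝ) (h1 : -1 ≤ c) (hcd : c < d) (h2 : d ≤ 1)
    (hpos : ∀ t ∈ Set.Ioo c d, 0 < f t) :
    0 < ∫ t in (-1:ℝ)..1, f t := by
  have hle : (∫ t in c..d, f t) ≤ ∫ t in (-1:ℝ)..1, f t := by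
    apply intervalIntegral.integral_mono_interval h1 hcd.le h2
    · filter_upwards with t using hnn t
    · exact hc.intervalIntegrable _ _
  have hpos' : 0 < ∫ t in c..d, f t :=
    intervalIntegral.intervalIntegral_pos_of_pos_on (hc.intervalIntegrable _ _) hpos hcd
  linarith

-- the integral of a nonneg continuous function positive at an interior point is positive
lemma integral_pos_at (f : ℝ → ℝ) (hc : Continuous f) (hnn : ∀ t, 0 ≤ f t)
    (x : ℝ) (hx : x ∈ Set.Ioo (-1:ℝ) 1) (hfx : 0 < f x) :
    0 < ∫ t in (-1:ℝ)..1, f t := by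
  have : {t | 0 < f t} ∈ nhds x := (isOpen_lt continuous_const hc).mem_nhds hfx
  obtain ⟨l, u, ⟨hl, hu⟩, hsub⟩ := mem_nhds_iff_exists_Ioo_subset.mp this
  set c := max l ((-1 + x)/2) with hc'
  set d := min u ((1 + x)/2) with hd'
  apply integral_pos_aux f hc hnn c d
  · apply le_max_of_le_right; linarith [hx.1]
  · have hcx : c < x := by
      apply max_lt hl; linarith [hx.2, hx.1]
    have hxd : x < d := by
      apply lt_min hu; linarith [hx.1, hx.2]
    linarith
  · apply min_le_of_right_le; linarith [hx.2]
  · intro t ht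
    apply hsub
    exact ⟨lt_of_le_of_lt (le_max_left _ _) ht.1, lt_of_lt_of_le ht.2 (min_le_left _ _)⟩

section Gauss

variable {m : ℕ} (z : Fin m → ℝ) (hz : StrictMono z)

noncomputable def gw (z : Fin m → ℝ) (i : Fin m) : ℝ :=
  (1/2) * ∫ t in (-1:ℝ)..1, (Lagrange.basis Finset.univ z i).eval t

lemma gauss_exact_low (hinj : Set.InjOn z ↑(Finset.univ : Finset (Fin m))) (f : Polynomial ℝ)
    (hf : f.degree < m) :
    ∑ i, gw z i * f.eval (z i) = (1/2) * ∫ t in (-1:ℝ)..1, f.eval t := by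
  have hcard : (Finset.univ : Finset (Fin m)).card = m := by simp
  have hdeg : f.degree < ((Finset.univ : Finset (Fin m)).card : WithBot ℕ) := by
    rwa [hcard]
  have hrep := Lagrange.eq_interpolate hinj hdeg
  conv_rhs => rw [hrep]
  rw [Lagrange.interpolate_apply]
  have : ∀ t : ℝ, (∑ i, C (f.eval (z i)) * Lagrange.basis Finset.univ z i).eval t
      = ∑ i, f.eval (z i) * (Lagrange.basis Finset.univ z i).eval t := by
    intro t; rw [eval_finset_sum]; simp
  simp_rw [this]
  rw [intervalIntegral.integral_finset_sum (f := fun i t => f.eval (z i) * (Lagrange.basis Finset.univ z i).eval t) (fun i _ =>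
    (Continuous.mul continuous_const (Lagrange.basis Finset.univ z i).continuous).intervalIntegrable _ _)]
  rw [Finset.mul_sum]
  congr 1
  ext i
  rw [intervalIntegral.integral_const_mul, gw]
  ring

lemma gauss_exact (hz : StrictMono z) (hm : 1 ≤ m) (hinj : Set.InjOn z ↑(Finset.univ : Finset (Fin m)))
    (hroot : ∀ i, (legendreP m).eval (z i) = 0)
    (f : Polynomial ℝ) (hf : f.natDegree ≤ 2*m - 1) :
    ∑ i, gw z i * f.eval (z i) = (1/2) * ∫ t in (-1:ℝ)..1, f.eval t := by
  classical
  set M : Polynomial ℝ := ∏ i, (X - C (z i)) with hM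
  have hMmonic : M.Monic := monic_prod_of_monic _ _ (fun i _ => monic_X_sub_C (z i))
  have hMdeg : M.natDegree = m := by
    rw [hM, natDegree_prod _ _ (fun i _ => X_sub_C_ne_zero (z i))]
    simp [natDegree_X_sub_C]
  have hfac := legendre_factor m z hz hroot
  set lc := (legendreP m).leadingCoeff with hlcdef
  have hlcne : lc ≠ 0 := leadingCoeff_legendre_ne m
  -- M in terms of legendreP
  have hMleg : M = C lc⁻¹ * legendreP m := by
    rw [hfac, ← mul_assoc, ← C_mul, inv_mul_cancel₀ hlcne, C_1, one_mul, hM]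
  have hdiv := Polynomial.modByMonic_add_div f M
  set q := f /ₘ M with hq
  set rem := f %ₘ M with hrem
  have hqdeg : q.natDegree < m := by
    rcases eq_or_ne q 0 with h | h
    · rw [h]; simp only [natDegree_zero]; omega
    · have := Polynomial.natDegree_divByMonic f hMmonic
      rw [← hq, hMdeg] at this
      omega
  have hremdeg : rem.degree < (m : WithBot ℕ) := by
    have := Polynomial.degree_modByMonic_lt f hMmonic
    rwa [← hrem, degree_eq_natDegree hMmonic.ne_zero, hMdeg] at this
  -- integral of M * q is zero
  have hI0 : ∫ t in (-1:ℝ)..1, (M * q).eval t = 0 := by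
    have : ∀ t : ℝ, (M * q).eval t
        = ((legendreP m).leadingCoeff)⁻¹ * ((legendreP m).eval t * q.eval t) := by
      intro t; rw [hMleg]; simp [eval_mul]; ring
    simp_rw [this]
    rw [intervalIntegral.integral_const_mul, legendre_ortho m q hqdeg, mul_zero]
  have hsplit : f = rem + M * q := by rw [← hdiv]
  have hMz : ∀ i, M.eval (z i) = 0 := by
    intro i
    rw [hM, eval_prod]
    apply Finset.prod_eq_zero (Finset.mem_univ i)
    simp
  calc ∑ i, gw z i * f.eval (z i)
      = ∑ i, gw z i * rem.eval (z i) := by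
        apply Finset.sum_congr rfl
        intro i _
        rw [hsplit]
        simp [eval_add, eval_mul, hMz i]
    _ = (1/2) * ∫ t in (-1:ℝ)..1, rem.eval t := gauss_exact_low z hinj rem hremdeg
    _ = (1/2) * ∫ t in (-1:ℝ)..1, f.eval t := by
        rw [hsplit]
        simp_rw [eval_add]
        rw [intervalIntegral.integral_add (poly_ii _ _ _) (poly_ii _ _ _), hI0, add_zero]

end Gauss

lemma gauss_w_pos {m : ℕ} (z : Fin m → ℝ) (hz : StrictMono z) (hm : 1 ≤ m)
    (hinj : Set.InjOn z ↑(Finset.univ : Finset (Fin m)))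
    (hroot : ∀ i, (legendreP m).eval (z i) = 0)
    (hI : ∀ i, z i ∈ Set.Ioo (-1:ℝ) 1) (i : Fin m) : 0 < gw z i := by
  classical
  set B : Polynomial ℝ := (Lagrange.basis Finset.univ z i)^2 with hB
  have hBdeg : B.natDegree ≤ 2*m - 1 := by
    rw [hB, natDegree_pow, Lagrange.natDegree_basis hinj (Finset.mem_univ i)]
    simp only [Finset.card_univ, Fintype.card_fin]
    omega
  have hkey := gauss_exact z hz hm hinj hroot B hBdeg
  have hsum : ∑ j, gw z j * B.eval (z j) = gw z i := by
    rw [Finset.sum_eq_single i]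
    · rw [hB]
      simp [Lagrange.eval_basis_self hinj (Finset.mem_univ i)]
    · intro j _ hji
      simp only [hB, eval_pow]
      rw [Lagrange.eval_basis_of_ne (Ne.symm hji) (Finset.mem_univ j)]
      ring
    · intro h; exact absurd (Finset.mem_univ i) h
  rw [hsum] at hkey
  rw [hkey]
  have hpos : 0 < ∫ t in (-1:ℝ)..1, B.eval t := by
    apply integral_pos_at _ B.continuous _ (z i) (hI i)
    · rw [hB]; simp [Lagrange.eval_basis_self hinj (Finset.mem_univ i)]
    · intro t; rw [hB]; simp [eval_pow]; positivity
  linarith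

lemma quad_exact_poly (n N : ℕ) (x w : Fin N → ℝ)
    (hmom : ∀ ℓ ≤ n, ∑ i, w i * x i ^ ℓ = (1 / 2) * ∫ t in (-1:ℝ)..1, t ^ ℓ)
    (p : Polynomial ℝ) (hp : p.natDegree ≤ n) :
    ∑ i, w i * p.eval (x i) = (1/2) * ∫ t in (-1:ℝ)..1, p.eval t := by
  have hev : ∀ t : ℝ, p.eval t = ∑ ℓ ∈ Finset.range (n+1), p.coeff ℓ * t ^ ℓ := by
    intro t
    exact Polynomial.eval_eq_sum_range' (Nat.lt_succ_of_le hp) t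
  calc ∑ i, w i * p.eval (x i)
      = ∑ i, ∑ ℓ ∈ Finset.range (n+1), p.coeff ℓ * (w i * x i ^ ℓ) := by
        apply Finset.sum_congr rfl
        intro i _
        rw [hev, Finset.mul_sum]
        apply Finset.sum_congr rfl
        intro ℓ _; ring
    _ = ∑ ℓ ∈ Finset.range (n+1), p.coeff ℓ * ∑ i, w i * x i ^ ℓ := by
        rw [Finset.sum_comm]
        apply Finset.sum_congr rfl
        intro ℓ _
        rw [Finset.mul_sum]
    _ = ∑ ℓ ∈ Finset.range (n+1), p.coeff ℓ * ((1/2) * ∫ t in (-1:ℝ)..1, t ^ ℓ) := by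
        apply Finset.sum_congr rfl
        intro ℓ hℓ
        rw [hmom ℓ (Nat.lt_succ_iff.mp (Finset.mem_range.mp hℓ))]
    _ = (1/2) * ∫ t in (-1:ℝ)..1, p.eval t := by
        simp_rw [hev]
        rw [intervalIntegral.integral_finset_sum (f := fun ℓ (t : ℝ) => p.coeff ℓ * t ^ ℓ) (fun ℓ _ =>
          (Continuous.mul continuous_const (continuous_pow ℓ)).intervalIntegrable _ _)]
        rw [Finset.mul_sum]
        apply Finset.sum_congr rfl
        intro ℓ _
        rw [intervalIntegral.integral_const_mul]
        ring

lemma part1_core (n m : ℕ) (hm : 0 < m) (hmn : 2*m ≤ n + 2)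
    (z : Fin m → ℝ) (hz : StrictMono z) (hzI : ∀ i, z i ∈ Set.Ioo (-1:ℝ) 1)
    (hroot : ∀ i, (legendreP m).eval (z i) = 0)
    (N : ℕ) (x w : Fin N → ℝ) (hw : ∀ i, 0 < w i)
    (hmom : ∀ ℓ ≤ n, ∑ i, w i * x i ^ ℓ = (1 / 2) * ∫ t in (-1:ℝ)..1, t ^ ℓ) :
    ∃ i, |z ⟨0, hm⟩| ≤ |x i| := by
  classical
  set i0 : Fin m := ⟨0, hm⟩ with hi0
  set il : Fin m := ⟨m-1, by omega⟩ with hil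
  have hrootiff := legendre_root_iff m z hz hroot
  have hsym : ∀ t, (legendreP m).eval t = 0 → (legendreP m).eval (-t) = 0 := by
    intro t ht
    rw [legendre_symm, ht, mul_zero]
  have hle_l : ∀ i, z i ≤ z il := fun i => hz.monotone (by rw [Fin.le_def]; simp [hil]; omega)
  have hge_0 : ∀ i, z i0 ≤ z i := fun i => hz.monotone (by rw [Fin.le_def]; simp [hi0])
  have hl_eq : z il = - z i0 := by
    obtain ⟨i, hi⟩ := (hrootiff _).mp (hsym _ (hroot i0))
    obtain ⟨j, hj⟩ := (hrootiff _).mp (hsym _ (hroot il))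
    have h1 := hle_l i
    have h2 := hge_0 j
    rw [← hi] at h1
    rw [← hj] at h2
    linarith
  have hz0 : z i0 ≤ 0 := by
    have := hle_l i0
    rw [hl_eq] at this
    linarith
  have habs : |z i0| = - z i0 := abs_of_nonpos hz0
  -- N is positive
  have hN : 0 < N := by
    rcases Nat.eq_zero_or_pos N with h | h
    · exfalso
      have h0 := hmom 0 (Nat.zero_le n)
      subst h
      simp only [Finset.univ_eq_empty, Finset.sum_empty, pow_zero] at h0
      rw [intervalIntegral.integral_const] at h0
      norm_num at h0
    · exact h
  rcases eq_or_lt_of_le (abs_nonneg (z i0)) with h0 | hpos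
  · exact ⟨⟨0, hN⟩, by rw [← h0]; exact abs_nonneg _⟩
  by_contra hcon
  push_neg at hcon
  have hmax : 0 < - z i0 := by rwa [habs] at hpos
  have hne : i0 ≠ il := by
    intro h
    rw [← h] at hl_eq
    linarith
  set J := (Finset.univ.erase il).erase i0 with hJ
  have hi0J : i0 ∈ Finset.univ.erase il := Finset.mem_erase.mpr ⟨hne, Finset.mem_univ i0⟩
  have hJcard : J.card = m - 2 := by
    rw [hJ, Finset.card_erase_of_mem hi0J, Finset.card_erase_of_mem (Finset.mem_univ il),
      Finset.card_univ, Fintype.card_fin]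
    omega
  have hprodsplit : (∏ i, (X - C (z i)))
      = (X - C (z i0)) * ((X - C (z il)) * ∏ j ∈ J, (X - C (z j))) := by
    rw [← Finset.mul_prod_erase _ _ (Finset.mem_univ il),
      ← Finset.mul_prod_erase _ _ hi0J]
    ring
  set lc := (legendreP m).leadingCoeff with hlc
  have hlcne : lc ≠ 0 := leadingCoeff_legendre_ne m
  have hfac := legendre_factor m z hz hroot
  rw [← hlc] at hfac
  set S : Polynomial ℝ := C lc * ∏ j ∈ J, (X - C (z j)) with hS
  have hkey : (legendreP m * S) * ((X - C (z i0)) * (X - C (z il))) = (legendreP m)^2 := by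
    calc (legendreP m * S) * ((X - C (z i0)) * (X - C (z il)))
        = legendreP m * (C lc * ((X - C (z i0)) * ((X - C (z il)) * ∏ j ∈ J, (X - C (z j))))) := by
          rw [hS]; ring
      _ = (legendreP m)^2 := by rw [← hprodsplit, ← hfac]; ring
  have hSne : S ≠ 0 := mul_ne_zero (by simpa using hlcne)
    (Finset.prod_ne_zero_iff.mpr fun j _ => X_sub_C_ne_zero _)
  have hSdeg : S.natDegree = m - 2 := by
    rw [hS, natDegree_C_mul hlcne, natDegree_prod _ _ (fun j _ => X_sub_C_ne_zero _)]
    simp only [natDegree_X_sub_C]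
    rw [Finset.sum_const, smul_eq_mul, mul_one, hJcard]
  have hQdeg : (legendreP m * S).natDegree ≤ n := by
    rw [natDegree_mul (legendre_ne_zero m) hSne, natDegree_legendre, hSdeg]
    omega
  have hIQ : ∫ t in (-1:ℝ)..1, (legendreP m * S).eval t = 0 := by
    simp_rw [eval_mul]
    exact legendre_ortho m S (by omega)
  have hq0 := quad_exact_poly n N x w hmom (legendreP m * S) hQdeg
  rw [hIQ, mul_zero] at hq0
  have hiden : ∀ i : Fin N, (legendreP m * S).eval (x i) * ((x i - z i0) * (x i - z il))
      = ((legendreP m).eval (x i))^2 := by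
    intro i
    have := congrArg (Polynomial.eval (x i)) hkey
    simpa [eval_mul, eval_sub, eval_X, eval_C, eval_pow] using this
  have hxlt : ∀ i : Fin N, z i0 < x i ∧ x i < z il := by
    intro i
    have := hcon i
    rw [habs] at this
    rw [hl_eq]
    constructor <;> [skip; skip] <;> cases' abs_lt.mp this with h1 h2 <;> linarith
  have hterm : ∀ i : Fin N, w i * (legendreP m * S).eval (x i) ≤ 0 := by
    intro i
    obtain ⟨ha, hb⟩ := hxlt i
    have hq : (legendreP m * S).eval (x i) ≤ 0 := by
      by_contra hq'
      push_neg at hq'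
      have hneg : (legendreP m * S).eval (x i) * ((x i - z i0) * (x i - z il)) < 0 :=
        mul_neg_of_pos_of_neg hq' (mul_neg_of_pos_of_neg (by linarith) (by linarith))
      rw [hiden i] at hneg
      exact absurd hneg (not_lt.mpr (sq_nonneg _))
    exact mul_nonpos_iff.mpr (Or.inl ⟨(hw i).le, hq⟩)
  have hzero : ∀ i ∈ Finset.univ, w i * (legendreP m * S).eval (x i) = 0 :=
    (Finset.sum_eq_zero_iff_of_nonpos (fun i _ => hterm i)).mp hq0
  have hnode_root : ∀ i : Fin N, ∃ j, x i = z j ∧ |z j| < - z i0 := by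
    intro i
    have hQxi : (legendreP m * S).eval (x i) = 0 := by
      rcases mul_eq_zero.mp (hzero i (Finset.mem_univ i)) with h | h
      · exact absurd h (hw i).ne'
      · exact h
    have hP2 : ((legendreP m).eval (x i))^2 = 0 := by
      rw [← hiden i, hQxi, zero_mul]
    have hPx : (legendreP m).eval (x i) = 0 := by
      exact pow_eq_zero_iff (by norm_num) |>.mp hP2
    obtain ⟨j, hj⟩ := (hrootiff _).mp hPx
    refine ⟨j, hj, ?_⟩
    rw [← hj]
    calc |x i| < |z i0| := hcon i
      _ = - z i0 := habs
  set K := Finset.univ.filter (fun j : Fin m => |z j| < - z i0) with hK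
  have hKsub : K ⊆ J := by
    intro j hj
    have hj' := (Finset.mem_filter.mp hj).2
    rw [hJ]
    refine Finset.mem_erase.mpr ⟨?_, Finset.mem_erase.mpr ⟨?_, Finset.mem_univ j⟩⟩
    · intro h
      rw [h, habs.symm] at hj'
      rw [habs] at hj'
      linarith
    · intro h
      rw [h, hl_eq, abs_of_pos hmax] at hj'
      linarith
  set T : Polynomial ℝ := ∏ j ∈ K, (X - C (z j))^2 with hT
  have hTdeg : T.natDegree ≤ n := by
    rw [hT, natDegree_prod _ _ (fun j _ => pow_ne_zero 2 (X_sub_C_ne_zero _))]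
    have : ∀ j ∈ K, ((X - C (z j))^2).natDegree = 2 := by
      intro j _
      rw [natDegree_pow, natDegree_X_sub_C]
    rw [Finset.sum_congr rfl this, Finset.sum_const, smul_eq_mul, mul_comm]
    have := Finset.card_le_card hKsub
    rw [hJcard] at this
    omega
  have hquadT := quad_exact_poly n N x w hmom T hTdeg
  have hTx : ∀ i : Fin N, T.eval (x i) = 0 := by
    intro i
    obtain ⟨j, hj1, hj2⟩ := hnode_root i
    rw [hT, eval_prod]
    apply Finset.prod_eq_zero (Finset.mem_filter.mpr ⟨Finset.mem_univ j, hj2⟩)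
    simp [hj1]
  have hTnn : ∀ t : ℝ, 0 ≤ T.eval t := by
    intro t
    rw [hT, eval_prod]
    apply Finset.prod_nonneg
    intro j _
    simp only [eval_pow, eval_sub, eval_X, eval_C]
    positivity
  have hTpos : 0 < ∫ t in (-1:ℝ)..1, T.eval t := by
    have hzm1 : (-1:ℝ) < z i0 := (hzI i0).1
    set t0 : ℝ := (- z i0 + 1)/2 with ht0
    apply integral_pos_at _ T.continuous hTnn t0
    · constructor <;> [skip; skip] <;> simp only [ht0] <;> nlinarith
    · rw [hT, eval_prod]
      apply Finset.prod_pos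
      intro j hj
      have hj' := (Finset.mem_filter.mp hj).2
      have hzj : z j < t0 := by
        have h1 : z j ≤ |z j| := le_abs_self _
        simp only [ht0]
        nlinarith
      simp only [eval_pow, eval_sub, eval_X, eval_C]
      exact pow_pos (by linarith) 2
  rw [Finset.sum_congr rfl (fun i _ => by rw [hTx i, mul_zero])] at hquadT
  rw [Finset.sum_const, smul_zero] at hquadT
  linarith



/-- Minimal-support characterization (Lemma A.1): among all finitely supported probability
measures on `[-1,1]` with positive weights whose moments up to order `n` agree with the
normalized Lebesgue measure, the minimal half-length `u(η) = max_i |x_i|` of a symmetric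
interval containing the support equals `|x₁*|`, where `x₁*` is the smallest zero of the
Legendre polynomial `P_r`, `r = ⌊n/2⌋ + 1`; the minimum is attained by the Gauss–Legendre
measure supported at the zeros of `P_r`. -/
theorem minimal_support_quadrature (n : ℕ) (x₁ : ℝ)
    (hx₁ : IsLeast {y : ℝ | (legendreP (n / 2 + 1)).eval y = 0} x₁) :
    (∀ (N : ℕ) (x : Fin N → ℝ) (w : Fin N → ℝ),
        (∀ i, x i ∈ Set.Icc (-1 : ℝ) 1) → (∀ i, 0 < w i) →
        (∀ ℓ ≤ n, ∑ i, w i * x i ^ ℓ = (1 / 2) * ∫ t in (-1 : ℝ)..1, t ^ ℓ) →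
        ∃ i, |x₁| ≤ |x i|) ∧
    ∃ (x : Fin (n / 2 + 1) → ℝ) (w : Fin (n / 2 + 1) → ℝ),
      (∀ i, x i ∈ Set.Icc (-1 : ℝ) 1) ∧ (∀ i, 0 < w i) ∧
      (∀ ℓ ≤ n, ∑ i, w i * x i ^ ℓ = (1 / 2) * ∫ t in (-1 : ℝ)..1, t ^ ℓ) ∧
      (∀ i, (legendreP (n / 2 + 1)).eval (x i) = 0) ∧
      ∀ i, |x i| ≤ |x₁| := by
  set m : ℕ := n / 2 + 1 with hmdef
  have hm : 0 < m := Nat.succ_pos _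
  have hmn : 2 * m ≤ n + 2 := by omega
  obtain ⟨z, hz, hzI, hroot⟩ := legendre_roots m
  have hinj : Set.InjOn z ↑(Finset.univ : Finset (Fin m)) := hz.injective.injOn
  have hrootiff := legendre_root_iff m z hz hroot
  set i0 : Fin m := ⟨0, hm⟩ with hi0
  set il : Fin m := ⟨m-1, by omega⟩ with hil
  have hge_0 : ∀ i, z i0 ≤ z i := fun i => hz.monotone (by rw [Fin.le_def]; simp [hi0])
  have hle_l : ∀ i, z i ≤ z il := fun i => hz.monotone (by rw [Fin.le_def]; simp [hil]; omega)
  have hx1 : x₁ = z i0 := by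
    apply hx₁.unique
    constructor
    · exact hroot i0
    · intro t ht
      obtain ⟨i, rfl⟩ := (hrootiff t).mp ht
      exact hge_0 i
  have hsym : ∀ t, (legendreP m).eval t = 0 → (legendreP m).eval (-t) = 0 := by
    intro t ht
    rw [legendre_symm, ht, mul_zero]
  have hl_eq : z il = - z i0 := by
    obtain ⟨i, hi⟩ := (hrootiff _).mp (hsym _ (hroot i0))
    obtain ⟨j, hj⟩ := (hrootiff _).mp (hsym _ (hroot il))
    have h1 := hle_l i
    have h2 := hge_0 j
    rw [← hi] at h1
    rw [← hj] at h2
    linarith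
  have hz0 : z i0 ≤ 0 := by
    have := hle_l i0
    rw [hl_eq] at this
    linarith
  constructor
  · intro N x w hxI hw hmom
    rw [hx1]
    exact part1_core n m hm hmn z hz hzI hroot N x w hw hmom
  · refine ⟨z, gw z, ?_, ?_, ?_, hroot, ?_⟩
    · intro i
      exact Set.mem_Icc_of_Ioo (hzI i)
    · intro i
      exact gauss_w_pos z hz hm hinj hroot hzI i
    · intro ℓ hℓ
      have hdeg : ((X : Polynomial ℝ)^ℓ).natDegree ≤ 2*m - 1 := by
        rw [natDegree_X_pow]
        omega
      have := gauss_exact z hz hm hinj hroot ((X : Polynomial ℝ)^ℓ) hdeg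
      simpa [eval_pow] using this
    · intro i
      rw [hx1, abs_of_nonpos hz0]
      rw [abs_le]
      constructor
      · linarith [hge_0 i]
      · linarith [hle_l i, hl_eq]
end

section
/- If z* = arccos|x_1*| where x_1* is the smallest zero of the Legendre polynomial P_{d+1}, then for any z > z* there is no probability measure ξ supported on [z, π−z] × (−π,π] whose information matrix in the spherical harmonic regression model of degree d equals I_{(d+1)²}. -/
open Polynomial

namespace Leg

noncomputable def W (n : ℕ) : ℝ[X] := (X ^ 2 - 1) ^ n

lemma monic_X2 : (X ^ 2 - 1 : ℝ[X]).Monic := by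
  simpa using monic_X_pow_sub_C (1 : ℝ) (n := 2) (by norm_num)

lemma monic_W (n : ℕ) : (W n).Monic := monic_X2.pow n

lemma natDegree_X2 : (X ^ 2 - 1 : ℝ[X]).natDegree = 2 := by
  compute_degree!

lemma natDegree_W (n : ℕ) : (W n).natDegree = 2 * n := by
  rw [W, natDegree_pow, natDegree_X2, mul_comm]

lemma descF_pos (n : ℕ) : (0:ℝ) < ((2 * n).descFactorial n : ℝ) := by
  have h : (2 * n).descFactorial n ≠ 0 := by
    intro h
    have := Nat.descFactorial_eq_zero_iff_lt.mp h
    omega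
  exact_mod_cast Nat.pos_of_ne_zero h

lemma coeff_iter_W (n : ℕ) : (derivative^[n] (W n)).coeff n = ((2 * n).descFactorial n : ℝ) := by
  rw [coeff_iterate_derivative]
  have h1 : (W n).coeff (n + n) = 1 := by
    have := (monic_W n).leadingCoeff
    rwa [leadingCoeff, natDegree_W, two_mul] at this
  rw [h1, ← two_mul]
  simp

lemma natDegree_iter_W (n : ℕ) : (derivative^[n] (W n)).natDegree = n := by
  refine le_antisymm ?_ ?_
  · have := natDegree_iterate_derivative (W n) n
    rw [natDegree_W] at this
    omega
  · apply le_natDegree_of_ne_zero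
    rw [coeff_iter_W]
    exact ne_of_gt (descF_pos n)

lemma cW_ne (n : ℕ) : ((2 ^ n * n.factorial : ℝ))⁻¹ ≠ 0 := by positivity

lemma legendreP_eq (n : ℕ) :
    legendreP n = C ((2 ^ n * n.factorial : ℝ))⁻¹ * derivative^[n] (W n) := rfl

lemma natDegree_legendreP (n : ℕ) : (legendreP n).natDegree = n := by
  rw [legendreP_eq, natDegree_C_mul (cW_ne n), natDegree_iter_W]

lemma coeff_legendreP (n : ℕ) :
    (legendreP n).coeff n = ((2 ^ n * n.factorial : ℝ))⁻¹ * ((2 * n).descFactorial n : ℝ) := by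
  rw [legendreP_eq, coeff_C_mul, coeff_iter_W]

lemma coeff_legendreP_pos (n : ℕ) : 0 < (legendreP n).coeff n := by
  rw [coeff_legendreP]
  have := descF_pos n
  positivity

lemma leadingCoeff_legendreP_pos (n : ℕ) : 0 < (legendreP n).leadingCoeff := by
  rw [leadingCoeff, natDegree_legendreP]; exact coeff_legendreP_pos n

lemma legendreP_ne_zero (n : ℕ) : legendreP n ≠ 0 := fun h => by
  simpa [h] using (leadingCoeff_legendreP_pos n).ne'

-- parity
lemma comp_neg_iter (n k : ℕ) :
    (derivative^[k] (W n)).comp (-X) = C ((-1:ℝ) ^ k) * derivative^[k] (W n) := by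
  induction k with
  | zero =>
    simp [W, sub_comp, pow_comp, X_comp, one_comp, neg_sq]
  | succ k ih =>
    have h := congrArg derivative ih
    rw [derivative_comp, derivative_neg, derivative_X, derivative_C_mul] at h
    simp only [Function.iterate_succ_apply']
    have hC : C ((-1:ℝ) ^ (k+1)) = -C ((-1:ℝ)^k) := by
      rw [pow_succ]; simp
    rw [hC]
    linear_combination -h

lemma legendreP_parity (n : ℕ) (x : ℝ) :
    (legendreP n).eval (-x) = (-1) ^ n * (legendreP n).eval x := by
  have h := comp_neg_iter n n
  have h2 := congrArg (fun p => eval x p) h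
  simp only [eval_comp, eval_neg, eval_X, eval_mul, eval_C] at h2
  rw [legendreP_eq]
  simp only [eval_mul, eval_C, h2]
  ring


lemma poly_ii (p : ℝ[X]) (a b : ℝ) :
    IntervalIntegrable (fun x => p.eval x) MeasureTheory.volume a b :=
  (p.continuous).intervalIntegrable _ _

lemma poly_ibp (p q : ℝ[X]) (a b : ℝ) :
    ∫ x in a..b, (derivative p).eval x * q.eval x
      = p.eval b * q.eval b - p.eval a * q.eval a
        - ∫ x in a..b, p.eval x * (derivative q).eval x := by
  have h := intervalIntegral.integral_deriv_mul_eq_sub (a := a) (b := b)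
    (u := fun x => p.eval x) (v := fun x => q.eval x)
    (u' := fun x => (derivative p).eval x) (v' := fun x => (derivative q).eval x)
    (fun x _ => p.hasDerivAt x) (fun x _ => q.hasDerivAt x)
    (poly_ii _ a b) (poly_ii _ a b)
  rw [intervalIntegral.integral_add (f := fun x => (derivative p).eval x * q.eval x)
    (g := fun x => p.eval x * (derivative q).eval x)
    (((derivative p).continuous.mul q.continuous).intervalIntegrable _ _)
    ((p.continuous.mul (derivative q).continuous).intervalIntegrable _ _)] at h
  linarith

lemma poly_ftc (p : ℝ[X]) (a b : ℝ) :
    ∫ x in a..b, (derivative p).eval x = p.eval b - p.eval a := by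
  have h := poly_ibp p 1 a b
  simpa using h


lemma eval_iter_W_boundary (n j : ℕ) (hj : j < n) (x : ℝ) (hx : x ^ 2 = 1) :
    (derivative^[j] (W n)).eval x = 0 := by
  obtain ⟨T, hT⟩ := pow_sub_dvd_iterate_derivative_pow (X ^ 2 - 1 : ℝ[X]) n j
  rw [show W n = (X ^ 2 - 1 : ℝ[X]) ^ n from rfl, hT, eval_mul, eval_pow, eval_sub, eval_pow,
    eval_X, eval_one, hx, sub_self, zero_pow (by omega), zero_mul]

lemma iterate_ibp (n : ℕ) (q : ℝ[X]) : ∀ k, k ≤ n →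
    ∫ x in (-1:ℝ)..1, (derivative^[n] (W n)).eval x * q.eval x
      = (-1:ℝ)^k * ∫ x in (-1:ℝ)..1,
          (derivative^[n-k] (W n)).eval x * (derivative^[k] q).eval x := by
  intro k
  induction k with
  | zero => simp
  | succ k ih =>
    intro hk
    rw [ih (by omega)]
    have hnk : n - k = (n - (k+1)) + 1 := by omega
    have hrw : derivative^[n-k] (W n) = derivative (derivative^[n-(k+1)] (W n)) := by
      rw [hnk, Function.iterate_succ_apply']
    rw [hrw, poly_ibp]
    rw [eval_iter_W_boundary n _ (by omega) 1 (by norm_num),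
        eval_iter_W_boundary n _ (by omega) (-1) (by norm_num)]
    rw [← Function.iterate_succ_apply' derivative k q]
    ring

lemma legendre_ortho (n : ℕ) (q : ℝ[X]) (hq : q.natDegree < n) :
    ∫ x in (-1:ℝ)..1, (legendreP n).eval x * q.eval x = 0 := by
  have h : ∀ x : ℝ, (legendreP n).eval x * q.eval x
      = ((2 ^ n * n.factorial : ℝ))⁻¹ * ((derivative^[n] (W n)).eval x * q.eval x) := by
    intro x
    rw [legendreP_eq, eval_mul, eval_C]; ring
  simp only [h]
  rw [intervalIntegral.integral_const_mul, iterate_ibp n q n le_rfl,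
    iterate_derivative_eq_zero hq]
  simp

lemma iter_2n_W (n : ℕ) :
    derivative^[2*n] (W n) = C (((2*n).factorial : ℝ)) := by
  have hdeg : (derivative^[2*n] (W n)).natDegree = 0 := by
    have := natDegree_iterate_derivative (W n) (2*n)
    rw [natDegree_W] at this
    omega
  have hco : (derivative^[2*n] (W n)).coeff 0 = (((2*n).factorial : ℝ)) := by
    rw [coeff_iterate_derivative]
    have h1 : (W n).coeff (0 + 2*n) = 1 := by
      have := (monic_W n).leadingCoeff
      rwa [leadingCoeff, natDegree_W, ← zero_add (2*n)] at this
    rw [h1, zero_add, Nat.descFactorial_self]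
    simp
  rw [eq_C_of_natDegree_le_zero hdeg.le, hco]

noncomputable def J (n : ℕ) : ℝ := ∫ x in (-1:ℝ)..1, (W n).eval x

lemma deriv_XW (n : ℕ) :
    derivative (X * W (n+1)) = C ((2*(n:ℝ)+3)) * W (n+1) + C (2*(n:ℝ)+2) * W n := by
  show derivative (X * (X^2-1)^(n+1)) = C ((2*(n:ℝ)+3)) * (X^2-1)^(n+1) + C (2*(n:ℝ)+2) * (X^2-1)^n
  rw [derivative_mul, derivative_X, derivative_pow, derivative_sub, derivative_one,
    derivative_X_pow]
  simp only [map_add, map_mul, map_ofNat, C_eq_natCast, Nat.cast_add, Nat.cast_one,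
    Nat.add_sub_cancel, C_1, map_one]
  push_cast
  ring

lemma J_rec (n : ℕ) : (2*(n:ℝ)+3) * J (n+1) + (2*(n:ℝ)+2) * J n = 0 := by
  have h := poly_ftc (X * W (n+1)) (-1) 1
  have hb : (X * W (n+1)).eval 1 = 0 := by
    simp [W, eval_mul]
  have hb' : (X * W (n+1)).eval (-1) = 0 := by
    simp [W, eval_mul]
  rw [hb, hb', deriv_XW] at h
  simp only [eval_add, eval_mul, eval_C] at h
  rw [intervalIntegral.integral_add (f := fun x => (2*(n:ℝ)+3) * (W (n+1)).eval x)
      (g := fun x => (2*(n:ℝ)+2) * (W n).eval x)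
      ((continuous_const.mul (Polynomial.continuous _)).intervalIntegrable _ _)
      ((continuous_const.mul (Polynomial.continuous _)).intervalIntegrable _ _),
    intervalIntegral.integral_const_mul, intervalIntegral.integral_const_mul] at h
  simp only [J]
  linarith

lemma J_val (n : ℕ) :
    J n = (-1:ℝ)^n * 2^(2*n+1) * (n.factorial:ℝ)^2 / ((2*n+1).factorial : ℝ) := by
  induction n with
  | zero =>
    simp [J, W]
    norm_num
  | succ n ih =>
    have hrec := J_rec n
    have h3 : (2*(n:ℝ)+3) ≠ 0 := by positivity
    have hJ : J (n+1) = -(2*(n:ℝ)+2) / (2*(n:ℝ)+3) * J n := by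
      field_simp at hrec ⊢
      linarith
    rw [hJ, ih]
    have hf1 : ((2*(n+1)+1).factorial : ℝ) = (2*(n:ℝ)+3) * ((2*(n:ℝ))+2) * ((2*n+1).factorial : ℝ) := by
      have : 2*(n+1)+1 = (2*n+1) + 1 + 1 := by omega
      rw [this, Nat.factorial_succ, Nat.factorial_succ]
      push_cast
      ring
    have hf2 : ((n+1).factorial : ℝ) = ((n:ℝ)+1) * (n.factorial : ℝ) := by
      rw [Nat.factorial_succ]; push_cast; ring
    have hpos1 : (0:ℝ) < ((2*n+1).factorial : ℝ) := by
      exact_mod_cast Nat.factorial_pos _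
    rw [hf1, hf2]
    field_simp
    push_cast
    ring

lemma iter_n_legendreP (n : ℕ) :
    derivative^[n] (legendreP n)
      = C (((2 ^ n * n.factorial : ℝ))⁻¹ * ((2*n).factorial : ℝ)) := by
  rw [legendreP_eq, iterate_derivative_C_mul, ← Function.iterate_add_apply,
    show n + n = 2*n by ring, iter_2n_W, ← C_mul]

lemma legendre_norm (n : ℕ) :
    ∫ x in (-1:ℝ)..1, (legendreP n).eval x * (legendreP n).eval x = 2 / (2*(n:ℝ)+1) := by
  have h1 : ∀ x:ℝ, (legendreP n).eval x * (legendreP n).eval x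
      = ((2 ^ n * n.factorial : ℝ))⁻¹
        * ((derivative^[n] (W n)).eval x * (legendreP n).eval x) := by
    intro x
    rw [legendreP_eq, eval_mul, eval_C]; ring
  simp only [h1]
  rw [intervalIntegral.integral_const_mul, iterate_ibp n (legendreP n) n le_rfl,
    iter_n_legendreP, Nat.sub_self]
  simp only [Function.iterate_zero_apply, eval_C]
  rw [intervalIntegral.integral_mul_const]
  have hJ : (∫ x in (-1:ℝ)..1, (W n).eval x) = J n := rfl
  rw [hJ, J_val]
  have hf1 : ((2*n+1).factorial : ℝ) = (2*(n:ℝ)+1) * ((2*n).factorial : ℝ) := by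
    rw [Nat.factorial_succ]; push_cast; ring
  have hp1 : (0:ℝ) < ((2*n).factorial : ℝ) := by exact_mod_cast Nat.factorial_pos _
  have hp2 : (0:ℝ) < (n.factorial : ℝ) := by exact_mod_cast Nat.factorial_pos _
  have hp3 : (0:ℝ) < (2:ℝ)^n := by positivity
  have hp4 : (0:ℝ) < 2*(n:ℝ)+1 := by positivity
  rw [hf1]
  field_simp
  ring_nf
  rw [show ((-1:ℝ))^(n*2) = 1 by rw [mul_comm, pow_mul]; norm_num]
  ring


lemma legendre_mul_integral (k l : ℕ) :
    ∫ x in (-1:ℝ)..1, (legendreP k).eval x * (legendreP l).eval x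
      = if k = l then 2 / (2*(k:ℝ)+1) else 0 := by
  rcases lt_trichotomy k l with h|h|h
  · rw [if_neg h.ne]
    have horth := legendre_ortho l (legendreP k) (by rw [natDegree_legendreP]; exact h)
    rw [← horth]
    apply intervalIntegral.integral_congr
    intro x _
    ring
  · subst h
    rw [if_pos rfl, legendre_norm]
  · rw [if_neg h.ne']
    exact legendre_ortho k (legendreP l) (by rw [natDegree_legendreP]; exact h)

open MeasureTheory in
lemma interval_pos (t : ℝ[X]) (ht : t ≠ 0) (h0 : ∀ x, 0 ≤ t.eval x) :
    0 < ∫ x in (-1:ℝ)..1, t.eval x := by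
  rw [intervalIntegral.integral_of_le (by norm_num)]
  have hint : Integrable (fun x => t.eval x) (volume.restrict (Set.Ioc (-1:ℝ) 1)) :=
    t.continuous.integrableOn_Ioc
  rw [integral_pos_iff_support_of_nonneg_ae
    (Filter.Eventually.of_forall h0) hint]
  have hsup : Function.support (fun x => t.eval x) = {x | t.eval x ≠ 0} := rfl
  have hms : MeasurableSet {x : ℝ | t.eval x ≠ 0} :=
    (isOpen_ne_fun t.continuous continuous_const).measurableSet
  rw [Measure.restrict_apply (by rw [hsup]; exact hms)]
  have hroots : volume {x : ℝ | t.IsRoot x} = 0 :=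
    (Polynomial.finite_setOf_isRoot ht).measure_zero _
  have hsub : Set.Ioc (-1:ℝ) 1 \ {x | t.IsRoot x}
      ⊆ Function.support (fun x => t.eval x) ∩ Set.Ioc (-1:ℝ) 1 := by
    intro x hx
    exact ⟨hx.2, hx.1⟩
  have h2 : volume (Set.Ioc (-1:ℝ) 1 \ {x | t.IsRoot x}) = volume (Set.Ioc (-1:ℝ) 1) :=
    measure_diff_null hroots
  have h3 : volume (Set.Ioc (-1:ℝ) 1) = 2 := by
    rw [Real.volume_Ioc]
    norm_num
  calc (0:ENNReal) < 2 := by norm_num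
    _ = volume (Set.Ioc (-1:ℝ) 1 \ {x | t.IsRoot x}) := by rw [h2, h3]
    _ ≤ _ := measure_mono hsub

end Leg

open MeasureTheory Real

namespace Leg

open Polynomial

lemma fvec_at (d k : ℕ) (h : k*k+k < (d+1)^2) (θ φ : ℝ) :
    fvec d ⟨k*k+k, h⟩ θ φ
      = Real.sqrt (2*k+1) * (legendreP k).eval (Real.cos θ) := by
  have hs : Nat.sqrt (k*k+k) = k := Nat.sqrt_add_eq k (by omega)
  show sphY (Nat.sqrt ((⟨k*k+k, h⟩ : Fin ((d+1)^2)) : ℕ))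
      (((⟨k*k+k, h⟩ : Fin ((d+1)^2)) : ℤ) - (Nat.sqrt ((⟨k*k+k, h⟩ : Fin ((d+1)^2)) : ℕ) : ℤ)^2
        - (Nat.sqrt ((⟨k*k+k, h⟩ : Fin ((d+1)^2)) : ℕ) : ℤ)) θ φ = _
  have hv : ((⟨k*k+k, h⟩ : Fin ((d+1)^2)) : ℕ) = k*k+k := rfl
  rw [hv, hs]
  have hm : ((⟨k*k+k, h⟩ : Fin ((d+1)^2)) : ℤ) - (k:ℤ)^2 - (k:ℤ) = 0 := by
    have : ((⟨k*k+k, h⟩ : Fin ((d+1)^2)) : ℤ) = ((k*k+k : ℕ) : ℤ) := rfl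
    rw [this]; push_cast; ring
  rw [hm]
  rw [sphY, if_pos rfl, assocP]
  simp only [pow_zero, Nat.cast_zero, zero_div, Real.rpow_zero, one_mul,
    Function.iterate_zero_apply, mul_one]

lemma index_lt (d k : ℕ) (hk : k ≤ d) : k*k+k < (d+1)^2 := by nlinarith

lemma index_inj {k l : ℕ} (h : k*k+k = l*l+l) : k = l := by nlinarith

end Leg

set_option maxHeartbeats 2000000 in
open Polynomial in
/-- Theorem 3.6: let `x₁*` be the smallest zero of the Legendre polynomial `P_{d+1}` and
`z* = arccos |x₁*|`. If `z > z*`, then no probability design supported on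
`[z, π - z] × (-π, π]` has identity information matrix in the spherical harmonic
regression model of degree `d`. -/
theorem no_design_on_shrunk_rectangle (d : ℕ) (x₁ : ℝ)
    (hx₁ : IsLeast {y : ℝ | (legendreP (d + 1)).eval y = 0} x₁)
    (z : ℝ) (hz : Real.arccos |x₁| < z)
    (ξ : Measure (ℝ × ℝ)) [IsProbabilityMeasure ξ]
    (hsupp : ξ ((Set.Icc z (π - z) ×ˢ Set.Ioc (-π) π)ᶜ) = 0) :
    infoMat d ξ ≠ (1 : Matrix (Fin ((d + 1) ^ 2)) (Fin ((d + 1) ^ 2)) ℝ) := by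
  intro hI
  classical
  rcases le_or_gt z (π/2) with hz2 | hz2
  swap
  · have hempty : Set.Icc z (π - z) = ∅ := Set.Icc_eq_empty (by intro h; linarith)
    rw [hempty, Set.empty_prod, Set.compl_empty] at hsupp
    have h1 := measure_univ (μ := ξ)
    rw [hsupp] at h1
    exact zero_ne_one h1
  set P := legendreP (d+1) with hP
  have hz0 : 0 < z := lt_of_le_of_lt (Real.arccos_nonneg _) hz
  have hpi : 0 < π := Real.pi_pos
  have hcznn : 0 ≤ Real.cos z := Real.cos_nonneg_of_mem_Icc ⟨by linarith, hz2⟩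
  set m := |x₁| with hm
  have hx1root : P.eval x₁ = 0 := hx₁.1
  have hx1neg : x₁ ≤ 0 := by
    have hroot : P.eval (-x₁) = 0 := by
      rw [hP, Leg.legendreP_parity, hx1root, mul_zero]
    have h2 := hx₁.2 hroot
    linarith
  have hmx : m = -x₁ := abs_of_nonpos hx1neg
  have hPm' : P.eval (-m) = 0 := by rw [hmx, neg_neg]; exact hx1root
  have hPm : P.eval m = 0 := by
    rw [hmx, hP, Leg.legendreP_parity, ← hP, hx1root, mul_zero]
  have hczm : Real.cos z < m := by
    rcases le_or_gt m 1 with h1 | h1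
    · have h0 : Real.arccos m ∈ Set.Icc 0 π := ⟨Real.arccos_nonneg _, Real.arccos_le_pi _⟩
      have hzI : z ∈ Set.Icc 0 π := ⟨hz0.le, by linarith⟩
      have h2 := Real.strictAntiOn_cos h0 hzI hz
      rwa [Real.cos_arccos (le_trans (by norm_num) (abs_nonneg x₁)) h1] at h2
    · exact lt_of_le_of_lt (Real.cos_le_one z) h1
  have hm0 : 0 < m := lt_of_le_of_lt hcznn hczm
  -- factorization P = (X - C m) * ((X + C m) * R)
  obtain ⟨Q, hQ⟩ := dvd_iff_isRoot.mpr (show P.IsRoot m from hPm)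
  have hQroot : Q.IsRoot (-m) := by
    have h3 := hPm'
    rw [hQ, eval_mul, eval_sub, eval_X, eval_C] at h3
    rcases mul_eq_zero.mp h3 with h4 | h4
    · linarith
    · exact h4
  obtain ⟨R, hR⟩ := dvd_iff_isRoot.mpr hQroot
  have hPfac : P = (X - C m) * ((X + C m) * R) := by
    rw [hQ, hR, map_neg, sub_neg_eq_add]
  have hPne : P ≠ 0 := Leg.legendreP_ne_zero _
  have hRne : R ≠ 0 := by
    intro h
    rw [h, mul_zero, mul_zero] at hPfac
    exact hPne hPfac
  have hXm : (X - C m : ℝ[X]) ≠ 0 := X_sub_C_ne_zero m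
  have hXm' : (X + C m : ℝ[X]) ≠ 0 := by
    rw [← sub_neg_eq_add, ← map_neg]
    exact X_sub_C_ne_zero (-m)
  have hdegP : P.natDegree = d + 1 := Leg.natDegree_legendreP _
  have hdegR : R.natDegree = d - 1 ∧ 1 ≤ d := by
    have h5 := hdegP
    rw [hPfac, natDegree_mul hXm (mul_ne_zero hXm' hRne),
        natDegree_mul hXm' hRne, natDegree_X_sub_C, natDegree_X_add_C] at h5
    omega
  -- the pushforward measure
  have hmeas : Measurable (fun p : ℝ × ℝ => Real.cos p.1) :=
    (Real.continuous_cos.comp continuous_fst).measurable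
  set μ : Measure ℝ := ξ.map (fun p : ℝ × ℝ => Real.cos p.1) with hμ
  have hμprob : IsProbabilityMeasure μ := Measure.isProbabilityMeasure_map hmeas.aemeasurable
  have hμmap : ∀ g : ℝ → ℝ, Continuous g →
      ∫ x, g x ∂μ = ∫ p, g (Real.cos p.1) ∂ξ := fun g hg =>
    integral_map hmeas.aemeasurable hg.aestronglyMeasurable
  have hconc : ∀ᵐ x ∂μ, x ∈ Set.Icc (-(Real.cos z)) (Real.cos z) := by
    have h6 : μ ((Set.Icc (-(Real.cos z)) (Real.cos z))ᶜ) = 0 := by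
      rw [hμ, Measure.map_apply hmeas measurableSet_Icc.compl]
      apply measure_mono_null _ hsupp
      intro p hp hmem
      obtain ⟨hθ, _⟩ := hmem
      apply hp
      constructor
      · rw [← Real.cos_pi_sub]
        exact Real.cos_le_cos_of_nonneg_of_le_pi (by linarith [hθ.1]) (by linarith) hθ.2
      · exact Real.cos_le_cos_of_nonneg_of_le_pi hz0.le (by linarith [hθ.2]) hθ.1
    rw [ae_iff]
    exact h6
  have hintμ : ∀ p : ℝ[X], Integrable (fun x => p.eval x) μ := by
    intro p
    obtain ⟨Mb, hMb⟩ := (isCompact_Icc (a := -(Real.cos z))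
      (b := Real.cos z)).exists_bound_of_continuousOn p.continuous.continuousOn
    refine Integrable.mono' (integrable_const Mb) p.continuous.aestronglyMeasurable ?_
    filter_upwards [hconc] with x hx
    exact hMb x hx
  -- entries of the information matrix
  have hent : ∀ k l : ℕ, k ≤ d → l ≤ d →
      ∫ x, (legendreP k).eval x * (legendreP l).eval x ∂μ
        = if k = l then 1/(2*(k:ℝ)+1) else 0 := by
    intro k l hk hl
    have hkj := Leg.index_lt d k hk
    have hlj := Leg.index_lt d l hl
    have hmat := congrFun (congrFun hI ⟨k*k+k, hkj⟩) ⟨l*l+l, hlj⟩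
    have hlhs : infoMat d ξ ⟨k*k+k, hkj⟩ ⟨l*l+l, hlj⟩
        = (Real.sqrt (2*k+1) * Real.sqrt (2*l+1)) *
          ∫ p, ((legendreP k).eval (Real.cos p.1) * (legendreP l).eval (Real.cos p.1)) ∂ξ := by
      rw [infoMat, ← integral_const_mul]
      apply integral_congr_ae
      apply Filter.Eventually.of_forall
      intro p
      show fvec d ⟨k*k+k, hkj⟩ p.1 p.2 * fvec d ⟨l*l+l, hlj⟩ p.1 p.2 = _
      rw [Leg.fvec_at d k hkj, Leg.fvec_at d l hlj]
      ring
    have hrhs : (1 : Matrix (Fin ((d + 1) ^ 2)) (Fin ((d + 1) ^ 2)) ℝ)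
        ⟨k*k+k, hkj⟩ ⟨l*l+l, hlj⟩ = if k = l then 1 else 0 := by
      rw [Matrix.one_apply]
      congr 1
      simp only [Fin.mk.injEq, eq_iff_iff]
      exact ⟨fun h => Leg.index_inj h, fun h => by rw [h]⟩
    rw [hlhs, hrhs] at hmat
    have hmapped := hμmap (fun x => (legendreP k).eval x * (legendreP l).eval x)
      ((legendreP k).continuous.mul (legendreP l).continuous)
    rw [← hmapped] at hmat
    have hsk : (0:ℝ) < Real.sqrt (2*k+1) := Real.sqrt_pos.mpr (by positivity)
    have hsl : (0:ℝ) < Real.sqrt (2*l+1) := Real.sqrt_pos.mpr (by positivity)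
    by_cases hkl : k = l
    · subst hkl
      rw [if_pos rfl] at hmat ⊢
      have hss : Real.sqrt (2*(k:ℝ)+1) * Real.sqrt (2*(k:ℝ)+1) = 2*(k:ℝ)+1 :=
        Real.mul_self_sqrt (by positivity)
      rw [hss] at hmat
      have h2k : (2*(k:ℝ)+1) ≠ 0 := by positivity
      field_simp
      simp only [sq]
      linarith
    · rw [if_neg hkl] at hmat ⊢
      have := mul_eq_zero.mp hmat
      rcases this with h7 | h7
      · exact absurd h7 (by positivity)
      · exact h7
  -- exactness of degree ≤ 2d
  have hexact : ∀ e : ℕ, e ≤ 2*d → ∀ p : ℝ[X], p.natDegree ≤ e →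
      ∫ x, p.eval x ∂μ = (∫ x in (-1:ℝ)..1, p.eval x) / 2 := by
    intro e
    induction e with
    | zero =>
      intro _ p hp
      rw [Polynomial.eq_C_of_natDegree_le_zero hp]
      simp
      ring
    | succ e ih =>
      intro he p hp
      set k := min d (e+1) with hk
      set l := (e+1) - k with hl
      have hkd : k ≤ d := min_le_left _ _
      have hld : l ≤ d := by omega
      have hkl : k + l = e + 1 := by omega
      set q := legendreP k * legendreP l with hq
      have hqdeg : q.natDegree = e+1 := by
        rw [hq, natDegree_mul (Leg.legendreP_ne_zero k) (Leg.legendreP_ne_zero l),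
          Leg.natDegree_legendreP, Leg.natDegree_legendreP, hkl]
      have hqlc : q.coeff (e+1) ≠ 0 := by
        have h8 : q.coeff (e+1) = q.leadingCoeff := by rw [leadingCoeff, hqdeg]
        rw [h8, hq, leadingCoeff_mul]
        exact mul_ne_zero (Leg.leadingCoeff_legendreP_pos k).ne'
          (Leg.leadingCoeff_legendreP_pos l).ne'
      set c := p.coeff (e+1) / q.coeff (e+1) with hc
      have hLq : ∫ x, q.eval x ∂μ = (∫ x in (-1:ℝ)..1, q.eval x) / 2 := by
        have h9 : ∫ x, q.eval x ∂μ
            = ∫ x, (legendreP k).eval x * (legendreP l).eval x ∂μ := by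
          apply integral_congr_ae
          apply Filter.Eventually.of_forall
          intro x
          simp [hq]
        have h10 : (∫ x in (-1:ℝ)..1, q.eval x)
            = ∫ x in (-1:ℝ)..1, (legendreP k).eval x * (legendreP l).eval x := by
          apply intervalIntegral.integral_congr
          intro x _
          simp [hq]
        rw [h9, h10, hent k l hkd hld, Leg.legendre_mul_integral]
        split_ifs <;> ring
      have hrest : (p - C c * q).natDegree ≤ e := by
        apply natDegree_le_iff_coeff_eq_zero.mpr
        intro N hN
        rcases eq_or_lt_of_le (Nat.succ_le_of_lt hN) with h12 | h12
        · rw [coeff_sub, coeff_C_mul, ← h12, hc, div_mul_cancel₀ _ hqlc, sub_self]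
        · rw [coeff_sub, coeff_C_mul,
            coeff_eq_zero_of_natDegree_lt (lt_of_le_of_lt hp h12),
            coeff_eq_zero_of_natDegree_lt (by omega : q.natDegree < N), mul_zero, sub_self]
      have hLrest := ih (by omega) _ hrest
      have hsplit : ∀ x : ℝ, p.eval x = (p - C c * q).eval x + c * q.eval x := by
        intro x; simp only [eval_add, eval_sub, eval_mul, eval_C]; ring
      calc ∫ x, p.eval x ∂μ
          = ∫ x, ((p - C c * q).eval x + c * q.eval x) ∂μ := by
            apply integral_congr_ae; exact Filter.Eventually.of_forall hsplit
        _ = (∫ x, (p - C c * q).eval x ∂μ) + c * ∫ x, q.eval x ∂μ := by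
            rw [integral_add (hintμ _) ((hintμ q).const_mul c), integral_const_mul]
        _ = (∫ x in (-1:ℝ)..1, (p - C c * q).eval x) / 2
              + c * ((∫ x in (-1:ℝ)..1, q.eval x) / 2) := by rw [hLrest, hLq]
        _ = (∫ x in (-1:ℝ)..1, p.eval x) / 2 := by
            rw [show (∫ x in (-1:ℝ)..1, p.eval x)
                = ∫ x in (-1:ℝ)..1, ((p - C c * q).eval x + c * q.eval x) from
                  intervalIntegral.integral_congr (fun x _ => hsplit x),
              intervalIntegral.integral_add (Leg.poly_ii _ _ _)
                (((Leg.poly_ii q (-1) 1).const_mul c)),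
              intervalIntegral.integral_const_mul]
            ring
  -- the polynomial u
  set u := (C (m^2) - X^2) * (R * R) with hu
  have hudeg : u.natDegree ≤ 2*d := by
    calc u.natDegree ≤ (C (m^2) - X^2 : ℝ[X]).natDegree + (R*R).natDegree :=
          natDegree_mul_le
      _ ≤ 2 + ((d-1) + (d-1)) := by
          gcongr
          · compute_degree
          · exact le_trans natDegree_mul_le (by rw [hdegR.1])
      _ ≤ 2*d := by omega
  have huP : u = -(P * R) := by
    have hCm : (C (m^2) : ℝ[X]) = C m ^ 2 := by rw [map_pow]
    rw [hu, hCm, hPfac]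
    ring
  have hintu : ∫ x in (-1:ℝ)..1, u.eval x = 0 := by
    have horth := Leg.legendre_ortho (d+1) R (by rw [hdegR.1]; omega)
    have h13 : ∀ x:ℝ, u.eval x = -(P.eval x * R.eval x) := by
      intro x; rw [huP]; simp
    rw [intervalIntegral.integral_congr (fun x _ => h13 x),
      intervalIntegral.integral_neg, ← hP] at *
    rw [horth, neg_zero]
  have hLu := hexact (2*d) le_rfl u hudeg
  rw [hintu] at hLu
  norm_num at hLu
  have hunn : 0 ≤ᵐ[μ] fun x => u.eval x := by
    filter_upwards [hconc] with x hx
    have hx2 : x^2 ≤ (Real.cos z)^2 := sq_le_sq' hx.1 hx.2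
    have h14 : u.eval x = (m^2 - x^2) * (R.eval x * R.eval x) := by simp [hu]
    rw [h14]
    have hcc : (Real.cos z)^2 ≤ m^2 := by nlinarith
    have hx2m : x^2 ≤ m^2 := le_trans hx2 hcc
    exact mul_nonneg (by linarith) (mul_self_nonneg _)
  have huzero : (fun x => u.eval x) =ᵐ[μ] 0 :=
    (integral_eq_zero_iff_of_nonneg_ae hunn (hintμ u)).mp hLu
  -- the polynomial t
  set t := ∏ s ∈ R.roots.toFinset, ((X - C s)^2) with ht
  have htmonic : t.Monic :=
    monic_prod_of_monic _ _ (fun s _ => (monic_X_sub_C s).pow 2)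
  have htne : t ≠ 0 := htmonic.ne_zero
  have htnn : ∀ x, 0 ≤ t.eval x := by
    intro x
    rw [ht, eval_prod]
    apply Finset.prod_nonneg
    intro s _
    rw [eval_pow]
    positivity
  have htdeg : t.natDegree ≤ 2*d := by
    rw [ht, natDegree_prod _ _ (fun s _ => pow_ne_zero 2 (X_sub_C_ne_zero s))]
    have h15 : ∀ s ∈ R.roots.toFinset, ((X - C s)^2 : ℝ[X]).natDegree = 2 := by
      intro s _
      rw [natDegree_pow, natDegree_X_sub_C]
    rw [Finset.sum_congr rfl h15, Finset.sum_const, smul_eq_mul]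
    have h16 : R.roots.toFinset.card ≤ d - 1 := by
      calc R.roots.toFinset.card ≤ Multiset.card R.roots := R.roots.toFinset_card_le
        _ ≤ R.natDegree := R.card_roots'
        _ = d - 1 := hdegR.1
    omega
  have htzero : (fun x => t.eval x) =ᵐ[μ] 0 := by
    filter_upwards [huzero, hconc] with x hxu hxc
    have hx2 : x^2 ≤ (Real.cos z)^2 := sq_le_sq' hxc.1 hxc.2
    have hRx : R.eval x = 0 := by
      have h17 : (m^2 - x^2) * (R.eval x * R.eval x) = 0 := by
        have h18 : u.eval x = (m^2 - x^2) * (R.eval x * R.eval x) := by simp [hu]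
        rw [← h18]
        exact hxu
      rcases mul_eq_zero.mp h17 with h19 | h19
      · nlinarith
      · rcases mul_eq_zero.mp h19 with h20 | h20 <;> exact h20
    have hmem : x ∈ R.roots.toFinset := by
      rw [Multiset.mem_toFinset, mem_roots hRne]
      exact hRx
    show t.eval x = 0
    rw [ht, eval_prod]
    apply Finset.prod_eq_zero hmem
    rw [eval_pow, eval_sub, eval_X, eval_C, sub_self]
    norm_num
  have hLt := hexact (2*d) le_rfl t htdeg
  have h0t : ∫ x, t.eval x ∂μ = 0 := by
    rw [integral_congr_ae htzero]
    simp
  rw [h0t] at hLt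
  have hpos := Leg.interval_pos t htne htnn
  linarith
end
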